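/- Let K be an algebraically closed field of characteristic 2, λ, μ ∈ K ∖ {0,1}. The first Külshammer ideal of the standard algebra Λ₃'(μ) (relations α² = σγ, μβ² = γσ, γα = βγ, σβ = ασ, symmetrizing form Ψ'(α³)=1, Ψ'(β³)=μ⁻¹, zero on other basis elements) equals span{α² + √μ·β², α³, β³}, of codimension 3 in the 6-dimensional center; whereas the first Külshammer ideal of the nonstandard algebra Λ₃(λ) (relations α² = σγ + α³, λβ² = γσ, γα = βγ, σβ = ασ, form Ψ(α³)=Ψ(α²)=1, Ψ(β³)=λ⁻¹, zero otherwise) equals span{α², β², α³, β³}, of codimension 2 in its 6-dimensional center. Hence the centers admit no isomorphism carrying one Külshammer ideal onto the other. -/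

import Mathlib

namespace Kul

theorem sum12 {M : Type*} [AddCommMonoid M] (f : Fin 12 → M) :
    ∑ i, f i = f 0 + f 1 + f 2 + f 3 + f 4 + f 5 + f 6 + f 7 + f 8 + f 9 + f 10 + f 11 := by
  rw [Fin.sum_univ_castSucc, Fin.sum_univ_castSucc, Fin.sum_univ_castSucc,
    Fin.sum_univ_castSucc, Fin.sum_univ_eight]
  rfl

structure Setup (K : Type*) [Field K] (Λ : Type*) [Ring Λ] [Algebra K Λ] where
  e1 : Λ
  e2 : Λ
  a : Λ
  B : Λ
  s : Λ
  g : Λ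
  t : K
  ε : K
  ht : t ≠ 0
  he1 : e1 * e1 = e1
  he2 : e2 * e2 = e2
  h12 : e1 * e2 = 0
  h21 : e2 * e1 = 0
  hsum : e1 + e2 = 1
  ha1 : e1 * a = a
  ha2 : a * e1 = a
  hB1 : e2 * B = B
  hB2 : B * e2 = B
  hs1 : e1 * s = s
  hs2 : s * e2 = s
  hg1 : e2 * g = g
  hg2 : g * e1 = g
  r1 : s * g = a ^ 2 - ε • a ^ 3
  r2 : g * s = t • B ^ 2
  r3 : g * a = B * g
  r4 : s * B = a * s
  za4 : a ^ 4 = 0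
  zA2s : a ^ 2 * s = 0
  zgA2 : g * a ^ 2 = 0
  zb4 : B ^ 4 = 0
  zsB2 : s * B ^ 2 = 0
  zB2g : B ^ 2 * g = 0
  b : Module.Basis (Fin 12) K Λ
  hb0 : b 0 = e1
  hb1 : b 1 = e2
  hb2 : b 2 = a
  hb3 : b 3 = B
  hb4 : b 4 = s
  hb5 : b 5 = g
  hb6 : b 6 = a ^ 2
  hb7 : b 7 = a * s
  hb8 : b 8 = B ^ 2
  hb9 : b 9 = g * a
  hb10 : b 10 = a ^ 3
  hb11 : b 11 = B ^ 3

namespace Setup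

variable {K : Type*} [Field K] {Λ : Type*} [Ring Λ] [Algebra K Λ] (S : Setup K Λ)

/-! unit lemmas -/
lemma uA2r : S.a ^ 2 * S.e1 = S.a ^ 2 := by rw [pow_two, mul_assoc, S.ha2]
lemma uA2l : S.e1 * S.a ^ 2 = S.a ^ 2 := by rw [pow_two, ← mul_assoc, S.ha1]
lemma uA3r : S.a ^ 3 * S.e1 = S.a ^ 3 := by rw [pow_succ, mul_assoc, S.ha2]
lemma uA3l : S.e1 * S.a ^ 3 = S.a ^ 3 := by
  rw [pow_succ' S.a 2, ← mul_assoc, S.ha1]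
lemma uB2r : S.B ^ 2 * S.e2 = S.B ^ 2 := by rw [pow_two, mul_assoc, S.hB2]
lemma uB2l : S.e2 * S.B ^ 2 = S.B ^ 2 := by rw [pow_two, ← mul_assoc, S.hB1]
lemma uB3r : S.B ^ 3 * S.e2 = S.B ^ 3 := by rw [pow_succ, mul_assoc, S.hB2]
lemma uB3l : S.e2 * S.B ^ 3 = S.B ^ 3 := by
  rw [pow_succ' S.B 2, ← mul_assoc, S.hB1]
lemma uASr : S.a * S.s * S.e2 = S.a * S.s := by rw [mul_assoc, S.hs2]
lemma uASl : S.e1 * (S.a * S.s) = S.a * S.s := by rw [← mul_assoc, S.ha1]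
lemma uGAr : S.g * S.a * S.e1 = S.g * S.a := by rw [mul_assoc, S.ha2]
lemma uGAl : S.e2 * (S.g * S.a) = S.g * S.a := by rw [← mul_assoc, S.hg1]

/-! type-mismatch zeros -/
lemma z12 (x y : Λ) (hx : x * S.e1 = x) (hy : S.e2 * y = y) : x * y = 0 := by
  rw [← hx, ← hy, mul_assoc, ← mul_assoc S.e1, S.h12, zero_mul, mul_zero]
lemma z21 (x y : Λ) (hx : x * S.e2 = x) (hy : S.e1 * y = y) : x * y = 0 := by
  rw [← hx, ← hy, mul_assoc, ← mul_assoc S.e2, S.h21, zero_mul, mul_zero]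

/-! derived products -/
lemma pA3s : S.a ^ 3 * S.s = 0 := by rw [pow_succ' S.a 2, mul_assoc, S.zA2s, mul_zero]
lemma paAS : S.a * (S.a * S.s) = 0 := by rw [← mul_assoc, ← pow_two, S.zA2s]
lemma pA2AS : S.a ^ 2 * (S.a * S.s) = 0 := by rw [← mul_assoc, ← pow_succ, S.pA3s]
lemma pA3AS : S.a ^ 3 * (S.a * S.s) = 0 := by
  rw [← mul_assoc, ← pow_succ, S.za4, zero_mul]
lemma pASb : S.a * S.s * S.B = 0 := by rw [mul_assoc, S.r4, S.paAS]
lemma pASB2 : S.a * S.s * S.B ^ 2 = 0 := by rw [mul_assoc, S.zsB2, mul_zero]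
lemma psB3 : S.s * S.B ^ 3 = 0 := by rw [pow_succ, ← mul_assoc, S.zsB2, zero_mul]
lemma pASB3 : S.a * S.s * S.B ^ 3 = 0 := by rw [mul_assoc, S.psB3, mul_zero]
lemma psGA : S.s * (S.g * S.a) = S.a ^ 3 := by
  rw [← mul_assoc, S.r1, sub_mul, smul_mul_assoc, ← pow_succ, ← pow_succ,
    S.za4, smul_zero, sub_zero]
lemma pASg : S.a * S.s * S.g = S.a ^ 3 := by
  rw [mul_assoc, S.r1, mul_sub, mul_smul_comm, ← pow_succ' S.a 2,
    ← pow_succ' S.a 3, S.za4, smul_zero, sub_zero]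
lemma pASGA : S.a * S.s * (S.g * S.a) = 0 := by
  rw [← mul_assoc, S.pASg, ← pow_succ, S.za4]
lemma pgAS : S.g * (S.a * S.s) = S.t • S.B ^ 3 := by
  rw [← mul_assoc, S.r3, mul_assoc, S.r2, mul_smul_comm, ← pow_succ' S.B 2]
lemma pGAs : S.g * S.a * S.s = S.t • S.B ^ 3 := by
  rw [S.r3, mul_assoc, S.r2, mul_smul_comm, ← pow_succ' S.B 2]
lemma pGAa : S.g * S.a * S.a = 0 := by rw [mul_assoc, ← pow_two, S.zgA2]
lemma pgA3 : S.g * S.a ^ 3 = 0 := by rw [pow_succ, ← mul_assoc, S.zgA2, zero_mul]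
lemma pGAA2 : S.g * S.a * S.a ^ 2 = 0 := by rw [mul_assoc, ← pow_succ' S.a 2, S.pgA3]
lemma pGAA3 : S.g * S.a * S.a ^ 3 = 0 := by
  rw [mul_assoc, ← pow_succ' S.a 3, S.za4, mul_zero]
lemma pGAAS : S.g * S.a * (S.a * S.s) = 0 := by rw [mul_assoc S.g, S.paAS, mul_zero]
lemma pbGA : S.B * (S.g * S.a) = 0 := by rw [← mul_assoc, ← S.r3, S.pGAa]
lemma pB2GA : S.B ^ 2 * (S.g * S.a) = 0 := by rw [← mul_assoc, S.zB2g, zero_mul]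
lemma pB3g : S.B ^ 3 * S.g = 0 := by rw [pow_succ' S.B 2, mul_assoc, S.zB2g, mul_zero]
lemma pB3GA : S.B ^ 3 * (S.g * S.a) = 0 := by rw [← mul_assoc, S.pB3g, zero_mul]
lemma pbB3 : S.B * S.B ^ 3 = 0 := by rw [← pow_succ', S.zb4]
lemma paA3 : S.a * S.a ^ 3 = 0 := by rw [← pow_succ', S.za4]
lemma pA3a : S.a ^ 3 * S.a = 0 := by rw [← pow_succ, S.za4]
lemma pB3b : S.B ^ 3 * S.B = 0 := by rw [← pow_succ, S.zb4]
lemma pA2A2 : S.a ^ 2 * S.a ^ 2 = 0 := by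
  rw [← pow_add]; exact S.za4
lemma pA2A3 : S.a ^ 2 * S.a ^ 3 = 0 := by
  rw [← pow_add, show (2 + 3 : ℕ) = 4 + 1 from rfl, pow_succ, S.za4, zero_mul]
lemma pA3A2 : S.a ^ 3 * S.a ^ 2 = 0 := by
  rw [← pow_add, show (3 + 2 : ℕ) = 4 + 1 from rfl, pow_succ, S.za4, zero_mul]
lemma pA3A3 : S.a ^ 3 * S.a ^ 3 = 0 := by
  rw [← pow_add, show (3 + 3 : ℕ) = 4 + 2 from rfl, pow_add, S.za4, zero_mul]
lemma pB2B2 : S.B ^ 2 * S.B ^ 2 = 0 := by rw [← pow_add]; exact S.zb4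
lemma pB2B3 : S.B ^ 2 * S.B ^ 3 = 0 := by
  rw [← pow_add, show (2 + 3 : ℕ) = 4 + 1 from rfl, pow_succ, S.zb4, zero_mul]
lemma pB3B2 : S.B ^ 3 * S.B ^ 2 = 0 := by
  rw [← pow_add, show (3 + 2 : ℕ) = 4 + 1 from rfl, pow_succ, S.zb4, zero_mul]
lemma pB3B3 : S.B ^ 3 * S.B ^ 3 = 0 := by
  rw [← pow_add, show (3 + 3 : ℕ) = 4 + 2 from rfl, pow_add, S.zb4, zero_mul]

lemma m0_0 : S.b 0 * S.b 0 = S.b 0 := by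
  rw [S.hb0]; exact S.he1
lemma m0_1 : S.b 0 * S.b 1 = 0 := by
  rw [S.hb0, S.hb1]; exact S.z12 _ _ S.he1 S.he2
lemma m0_2 : S.b 0 * S.b 2 = S.b 2 := by
  rw [S.hb0, S.hb2]; exact S.ha1
lemma m0_3 : S.b 0 * S.b 3 = 0 := by
  rw [S.hb0, S.hb3]; exact S.z12 _ _ S.he1 S.hB1
lemma m0_4 : S.b 0 * S.b 4 = S.b 4 := by
  rw [S.hb0, S.hb4]; exact S.hs1
lemma m0_5 : S.b 0 * S.b 5 = 0 := by
  rw [S.hb0, S.hb5]; exact S.z12 _ _ S.he1 S.hg1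
lemma m0_6 : S.b 0 * S.b 6 = S.b 6 := by
  rw [S.hb0, S.hb6]; exact S.uA2l
lemma m0_7 : S.b 0 * S.b 7 = S.b 7 := by
  rw [S.hb0, S.hb7]; exact S.uASl
lemma m0_8 : S.b 0 * S.b 8 = 0 := by
  rw [S.hb0, S.hb8]; exact S.z12 _ _ S.he1 S.uB2l
lemma m0_9 : S.b 0 * S.b 9 = 0 := by
  rw [S.hb0, S.hb9]; exact S.z12 _ _ S.he1 S.uGAl
lemma m0_10 : S.b 0 * S.b 10 = S.b 10 := by
  rw [S.hb0, S.hb10]; exact S.uA3l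
lemma m0_11 : S.b 0 * S.b 11 = 0 := by
  rw [S.hb0, S.hb11]; exact S.z12 _ _ S.he1 S.uB3l
lemma m1_0 : S.b 1 * S.b 0 = 0 := by
  rw [S.hb0, S.hb1]; exact S.z21 _ _ S.he2 S.he1
lemma m1_1 : S.b 1 * S.b 1 = S.b 1 := by
  rw [S.hb1]; exact S.he2
lemma m1_2 : S.b 1 * S.b 2 = 0 := by
  rw [S.hb1, S.hb2]; exact S.z21 _ _ S.he2 S.ha1
lemma m1_3 : S.b 1 * S.b 3 = S.b 3 := by
  rw [S.hb1, S.hb3]; exact S.hB1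
lemma m1_4 : S.b 1 * S.b 4 = 0 := by
  rw [S.hb1, S.hb4]; exact S.z21 _ _ S.he2 S.hs1
lemma m1_5 : S.b 1 * S.b 5 = S.b 5 := by
  rw [S.hb1, S.hb5]; exact S.hg1
lemma m1_6 : S.b 1 * S.b 6 = 0 := by
  rw [S.hb1, S.hb6]; exact S.z21 _ _ S.he2 S.uA2l
lemma m1_7 : S.b 1 * S.b 7 = 0 := by
  rw [S.hb1, S.hb7]; exact S.z21 _ _ S.he2 S.uASl
lemma m1_8 : S.b 1 * S.b 8 = S.b 8 := by
  rw [S.hb1, S.hb8]; exact S.uB2l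
lemma m1_9 : S.b 1 * S.b 9 = S.b 9 := by
  rw [S.hb1, S.hb9]; exact S.uGAl
lemma m1_10 : S.b 1 * S.b 10 = 0 := by
  rw [S.hb1, S.hb10]; exact S.z21 _ _ S.he2 S.uA3l
lemma m1_11 : S.b 1 * S.b 11 = S.b 11 := by
  rw [S.hb1, S.hb11]; exact S.uB3l
lemma m2_0 : S.b 2 * S.b 0 = S.b 2 := by
  rw [S.hb0, S.hb2]; exact S.ha2
lemma m2_1 : S.b 2 * S.b 1 = 0 := by
  rw [S.hb1, S.hb2]; exact S.z12 _ _ S.ha2 S.he2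
lemma m2_2 : S.b 2 * S.b 2 = S.b 6 := by
  rw [S.hb2, S.hb6]; exact (pow_two S.a).symm
lemma m2_3 : S.b 2 * S.b 3 = 0 := by
  rw [S.hb2, S.hb3]; exact S.z12 _ _ S.ha2 S.hB1
lemma m2_4 : S.b 2 * S.b 4 = S.b 7 := by
  rw [S.hb2, S.hb4, S.hb7]
lemma m2_5 : S.b 2 * S.b 5 = 0 := by
  rw [S.hb2, S.hb5]; exact S.z12 _ _ S.ha2 S.hg1
lemma m2_6 : S.b 2 * S.b 6 = S.b 10 := by
  rw [S.hb2, S.hb6, S.hb10]; exact (pow_succ' S.a 2).symm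
lemma m2_7 : S.b 2 * S.b 7 = 0 := by
  rw [S.hb2, S.hb7]; exact S.paAS
lemma m2_8 : S.b 2 * S.b 8 = 0 := by
  rw [S.hb2, S.hb8]; exact S.z12 _ _ S.ha2 S.uB2l
lemma m2_9 : S.b 2 * S.b 9 = 0 := by
  rw [S.hb2, S.hb9]; exact S.z12 _ _ S.ha2 S.uGAl
lemma m2_10 : S.b 2 * S.b 10 = 0 := by
  rw [S.hb2, S.hb10]; exact S.paA3
lemma m2_11 : S.b 2 * S.b 11 = 0 := by
  rw [S.hb2, S.hb11]; exact S.z12 _ _ S.ha2 S.uB3l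
lemma m3_0 : S.b 3 * S.b 0 = 0 := by
  rw [S.hb0, S.hb3]; exact S.z21 _ _ S.hB2 S.he1
lemma m3_1 : S.b 3 * S.b 1 = S.b 3 := by
  rw [S.hb1, S.hb3]; exact S.hB2
lemma m3_2 : S.b 3 * S.b 2 = 0 := by
  rw [S.hb2, S.hb3]; exact S.z21 _ _ S.hB2 S.ha1
lemma m3_3 : S.b 3 * S.b 3 = S.b 8 := by
  rw [S.hb3, S.hb8]; exact (pow_two S.B).symm
lemma m3_4 : S.b 3 * S.b 4 = 0 := by
  rw [S.hb3, S.hb4]; exact S.z21 _ _ S.hB2 S.hs1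
lemma m3_5 : S.b 3 * S.b 5 = S.b 9 := by
  rw [S.hb3, S.hb5, S.hb9]; exact S.r3.symm
lemma m3_6 : S.b 3 * S.b 6 = 0 := by
  rw [S.hb3, S.hb6]; exact S.z21 _ _ S.hB2 S.uA2l
lemma m3_7 : S.b 3 * S.b 7 = 0 := by
  rw [S.hb3, S.hb7]; exact S.z21 _ _ S.hB2 S.uASl
lemma m3_8 : S.b 3 * S.b 8 = S.b 11 := by
  rw [S.hb3, S.hb8, S.hb11]; exact (pow_succ' S.B 2).symm
lemma m3_9 : S.b 3 * S.b 9 = 0 := by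
  rw [S.hb3, S.hb9]; exact S.pbGA
lemma m3_10 : S.b 3 * S.b 10 = 0 := by
  rw [S.hb3, S.hb10]; exact S.z21 _ _ S.hB2 S.uA3l
lemma m3_11 : S.b 3 * S.b 11 = 0 := by
  rw [S.hb3, S.hb11]; exact S.pbB3
lemma m4_0 : S.b 4 * S.b 0 = 0 := by
  rw [S.hb0, S.hb4]; exact S.z21 _ _ S.hs2 S.he1
lemma m4_1 : S.b 4 * S.b 1 = S.b 4 := by
  rw [S.hb1, S.hb4]; exact S.hs2
lemma m4_2 : S.b 4 * S.b 2 = 0 := by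
  rw [S.hb2, S.hb4]; exact S.z21 _ _ S.hs2 S.ha1
lemma m4_3 : S.b 4 * S.b 3 = S.b 7 := by
  rw [S.hb3, S.hb4, S.hb7]; exact S.r4
lemma m4_4 : S.b 4 * S.b 4 = 0 := by
  rw [S.hb4]; exact S.z21 _ _ S.hs2 S.hs1
lemma m4_5 : S.b 4 * S.b 5 = S.b 6 - S.ε • S.b 10 := by
  rw [S.hb4, S.hb5, S.hb6, S.hb10]; exact S.r1
lemma m4_6 : S.b 4 * S.b 6 = 0 := by
  rw [S.hb4, S.hb6]; exact S.z21 _ _ S.hs2 S.uA2l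
lemma m4_7 : S.b 4 * S.b 7 = 0 := by
  rw [S.hb4, S.hb7]; exact S.z21 _ _ S.hs2 S.uASl
lemma m4_8 : S.b 4 * S.b 8 = 0 := by
  rw [S.hb4, S.hb8]; exact S.zsB2
lemma m4_9 : S.b 4 * S.b 9 = S.b 10 := by
  rw [S.hb4, S.hb9, S.hb10]; exact S.psGA
lemma m4_10 : S.b 4 * S.b 10 = 0 := by
  rw [S.hb4, S.hb10]; exact S.z21 _ _ S.hs2 S.uA3l
lemma m4_11 : S.b 4 * S.b 11 = 0 := by
  rw [S.hb4, S.hb11]; exact S.psB3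
lemma m5_0 : S.b 5 * S.b 0 = S.b 5 := by
  rw [S.hb0, S.hb5]; exact S.hg2
lemma m5_1 : S.b 5 * S.b 1 = 0 := by
  rw [S.hb1, S.hb5]; exact S.z12 _ _ S.hg2 S.he2
lemma m5_2 : S.b 5 * S.b 2 = S.b 9 := by
  rw [S.hb2, S.hb5, S.hb9]
lemma m5_3 : S.b 5 * S.b 3 = 0 := by
  rw [S.hb3, S.hb5]; exact S.z12 _ _ S.hg2 S.hB1
lemma m5_4 : S.b 5 * S.b 4 = S.t • S.b 8 := by
  rw [S.hb4, S.hb5, S.hb8]; exact S.r2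
lemma m5_5 : S.b 5 * S.b 5 = 0 := by
  rw [S.hb5]; exact S.z12 _ _ S.hg2 S.hg1
lemma m5_6 : S.b 5 * S.b 6 = 0 := by
  rw [S.hb5, S.hb6]; exact S.zgA2
lemma m5_7 : S.b 5 * S.b 7 = S.t • S.b 11 := by
  rw [S.hb5, S.hb7, S.hb11]; exact S.pgAS
lemma m5_8 : S.b 5 * S.b 8 = 0 := by
  rw [S.hb5, S.hb8]; exact S.z12 _ _ S.hg2 S.uB2l
lemma m5_9 : S.b 5 * S.b 9 = 0 := by
  rw [S.hb5, S.hb9]; exact S.z12 _ _ S.hg2 S.uGAl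
lemma m5_10 : S.b 5 * S.b 10 = 0 := by
  rw [S.hb5, S.hb10]; exact S.pgA3
lemma m5_11 : S.b 5 * S.b 11 = 0 := by
  rw [S.hb5, S.hb11]; exact S.z12 _ _ S.hg2 S.uB3l
lemma m6_0 : S.b 6 * S.b 0 = S.b 6 := by
  rw [S.hb0, S.hb6]; exact S.uA2r
lemma m6_1 : S.b 6 * S.b 1 = 0 := by
  rw [S.hb1, S.hb6]; exact S.z12 _ _ S.uA2r S.he2
lemma m6_2 : S.b 6 * S.b 2 = S.b 10 := by
  rw [S.hb2, S.hb6, S.hb10]; exact (pow_succ S.a 2).symm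
lemma m6_3 : S.b 6 * S.b 3 = 0 := by
  rw [S.hb3, S.hb6]; exact S.z12 _ _ S.uA2r S.hB1
lemma m6_4 : S.b 6 * S.b 4 = 0 := by
  rw [S.hb4, S.hb6]; exact S.zA2s
lemma m6_5 : S.b 6 * S.b 5 = 0 := by
  rw [S.hb5, S.hb6]; exact S.z12 _ _ S.uA2r S.hg1
lemma m6_6 : S.b 6 * S.b 6 = 0 := by
  rw [S.hb6]; exact S.pA2A2
lemma m6_7 : S.b 6 * S.b 7 = 0 := by
  rw [S.hb6, S.hb7]; exact S.pA2AS
lemma m6_8 : S.b 6 * S.b 8 = 0 := by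
  rw [S.hb6, S.hb8]; exact S.z12 _ _ S.uA2r S.uB2l
lemma m6_9 : S.b 6 * S.b 9 = 0 := by
  rw [S.hb6, S.hb9]; exact S.z12 _ _ S.uA2r S.uGAl
lemma m6_10 : S.b 6 * S.b 10 = 0 := by
  rw [S.hb6, S.hb10]; exact S.pA2A3
lemma m6_11 : S.b 6 * S.b 11 = 0 := by
  rw [S.hb6, S.hb11]; exact S.z12 _ _ S.uA2r S.uB3l
lemma m7_0 : S.b 7 * S.b 0 = 0 := by
  rw [S.hb0, S.hb7]; exact S.z21 _ _ S.uASr S.he1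
lemma m7_1 : S.b 7 * S.b 1 = S.b 7 := by
  rw [S.hb1, S.hb7]; exact S.uASr
lemma m7_2 : S.b 7 * S.b 2 = 0 := by
  rw [S.hb2, S.hb7]; exact S.z21 _ _ S.uASr S.ha1
lemma m7_3 : S.b 7 * S.b 3 = 0 := by
  rw [S.hb3, S.hb7]; exact S.pASb
lemma m7_4 : S.b 7 * S.b 4 = 0 := by
  rw [S.hb4, S.hb7]; exact S.z21 _ _ S.uASr S.hs1
lemma m7_5 : S.b 7 * S.b 5 = S.b 10 := by
  rw [S.hb5, S.hb7, S.hb10]; exact S.pASg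
lemma m7_6 : S.b 7 * S.b 6 = 0 := by
  rw [S.hb6, S.hb7]; exact S.z21 _ _ S.uASr S.uA2l
lemma m7_7 : S.b 7 * S.b 7 = 0 := by
  rw [S.hb7]; exact S.z21 _ _ S.uASr S.uASl
lemma m7_8 : S.b 7 * S.b 8 = 0 := by
  rw [S.hb7, S.hb8]; exact S.pASB2
lemma m7_9 : S.b 7 * S.b 9 = 0 := by
  rw [S.hb7, S.hb9]; exact S.pASGA
lemma m7_10 : S.b 7 * S.b 10 = 0 := by
  rw [S.hb7, S.hb10]; exact S.z21 _ _ S.uASr S.uA3l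
lemma m7_11 : S.b 7 * S.b 11 = 0 := by
  rw [S.hb7, S.hb11]; exact S.pASB3
lemma m8_0 : S.b 8 * S.b 0 = 0 := by
  rw [S.hb0, S.hb8]; exact S.z21 _ _ S.uB2r S.he1
lemma m8_1 : S.b 8 * S.b 1 = S.b 8 := by
  rw [S.hb1, S.hb8]; exact S.uB2r
lemma m8_2 : S.b 8 * S.b 2 = 0 := by
  rw [S.hb2, S.hb8]; exact S.z21 _ _ S.uB2r S.ha1
lemma m8_3 : S.b 8 * S.b 3 = S.b 11 := by
  rw [S.hb3, S.hb8, S.hb11]; exact (pow_succ S.B 2).symm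
lemma m8_4 : S.b 8 * S.b 4 = 0 := by
  rw [S.hb4, S.hb8]; exact S.z21 _ _ S.uB2r S.hs1
lemma m8_5 : S.b 8 * S.b 5 = 0 := by
  rw [S.hb5, S.hb8]; exact S.zB2g
lemma m8_6 : S.b 8 * S.b 6 = 0 := by
  rw [S.hb6, S.hb8]; exact S.z21 _ _ S.uB2r S.uA2l
lemma m8_7 : S.b 8 * S.b 7 = 0 := by
  rw [S.hb7, S.hb8]; exact S.z21 _ _ S.uB2r S.uASl
lemma m8_8 : S.b 8 * S.b 8 = 0 := by
  rw [S.hb8]; exact S.pB2B2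
lemma m8_9 : S.b 8 * S.b 9 = 0 := by
  rw [S.hb8, S.hb9]; exact S.pB2GA
lemma m8_10 : S.b 8 * S.b 10 = 0 := by
  rw [S.hb8, S.hb10]; exact S.z21 _ _ S.uB2r S.uA3l
lemma m8_11 : S.b 8 * S.b 11 = 0 := by
  rw [S.hb8, S.hb11]; exact S.pB2B3
lemma m9_0 : S.b 9 * S.b 0 = S.b 9 := by
  rw [S.hb0, S.hb9]; exact S.uGAr
lemma m9_1 : S.b 9 * S.b 1 = 0 := by
  rw [S.hb1, S.hb9]; exact S.z12 _ _ S.uGAr S.he2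
lemma m9_2 : S.b 9 * S.b 2 = 0 := by
  rw [S.hb2, S.hb9]; exact S.pGAa
lemma m9_3 : S.b 9 * S.b 3 = 0 := by
  rw [S.hb3, S.hb9]; exact S.z12 _ _ S.uGAr S.hB1
lemma m9_4 : S.b 9 * S.b 4 = S.t • S.b 11 := by
  rw [S.hb4, S.hb9, S.hb11]; exact S.pGAs
lemma m9_5 : S.b 9 * S.b 5 = 0 := by
  rw [S.hb5, S.hb9]; exact S.z12 _ _ S.uGAr S.hg1
lemma m9_6 : S.b 9 * S.b 6 = 0 := by
  rw [S.hb6, S.hb9]; exact S.pGAA2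
lemma m9_7 : S.b 9 * S.b 7 = 0 := by
  rw [S.hb7, S.hb9]; exact S.pGAAS
lemma m9_8 : S.b 9 * S.b 8 = 0 := by
  rw [S.hb8, S.hb9]; exact S.z12 _ _ S.uGAr S.uB2l
lemma m9_9 : S.b 9 * S.b 9 = 0 := by
  rw [S.hb9]; exact S.z12 _ _ S.uGAr S.uGAl
lemma m9_10 : S.b 9 * S.b 10 = 0 := by
  rw [S.hb9, S.hb10]; exact S.pGAA3
lemma m9_11 : S.b 9 * S.b 11 = 0 := by
  rw [S.hb9, S.hb11]; exact S.z12 _ _ S.uGAr S.uB3l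
lemma m10_0 : S.b 10 * S.b 0 = S.b 10 := by
  rw [S.hb0, S.hb10]; exact S.uA3r
lemma m10_1 : S.b 10 * S.b 1 = 0 := by
  rw [S.hb1, S.hb10]; exact S.z12 _ _ S.uA3r S.he2
lemma m10_2 : S.b 10 * S.b 2 = 0 := by
  rw [S.hb2, S.hb10]; exact S.pA3a
lemma m10_3 : S.b 10 * S.b 3 = 0 := by
  rw [S.hb3, S.hb10]; exact S.z12 _ _ S.uA3r S.hB1
lemma m10_4 : S.b 10 * S.b 4 = 0 := by
  rw [S.hb4, S.hb10]; exact S.pA3s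
lemma m10_5 : S.b 10 * S.b 5 = 0 := by
  rw [S.hb5, S.hb10]; exact S.z12 _ _ S.uA3r S.hg1
lemma m10_6 : S.b 10 * S.b 6 = 0 := by
  rw [S.hb6, S.hb10]; exact S.pA3A2
lemma m10_7 : S.b 10 * S.b 7 = 0 := by
  rw [S.hb7, S.hb10]; exact S.pA3AS
lemma m10_8 : S.b 10 * S.b 8 = 0 := by
  rw [S.hb8, S.hb10]; exact S.z12 _ _ S.uA3r S.uB2l
lemma m10_9 : S.b 10 * S.b 9 = 0 := by
  rw [S.hb9, S.hb10]; exact S.z12 _ _ S.uA3r S.uGAl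
lemma m10_10 : S.b 10 * S.b 10 = 0 := by
  rw [S.hb10]; exact S.pA3A3
lemma m10_11 : S.b 10 * S.b 11 = 0 := by
  rw [S.hb10, S.hb11]; exact S.z12 _ _ S.uA3r S.uB3l
lemma m11_0 : S.b 11 * S.b 0 = 0 := by
  rw [S.hb0, S.hb11]; exact S.z21 _ _ S.uB3r S.he1
lemma m11_1 : S.b 11 * S.b 1 = S.b 11 := by
  rw [S.hb1, S.hb11]; exact S.uB3r
lemma m11_2 : S.b 11 * S.b 2 = 0 := by
  rw [S.hb2, S.hb11]; exact S.z21 _ _ S.uB3r S.ha1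
lemma m11_3 : S.b 11 * S.b 3 = 0 := by
  rw [S.hb3, S.hb11]; exact S.pB3b
lemma m11_4 : S.b 11 * S.b 4 = 0 := by
  rw [S.hb4, S.hb11]; exact S.z21 _ _ S.uB3r S.hs1
lemma m11_5 : S.b 11 * S.b 5 = 0 := by
  rw [S.hb5, S.hb11]; exact S.pB3g
lemma m11_6 : S.b 11 * S.b 6 = 0 := by
  rw [S.hb6, S.hb11]; exact S.z21 _ _ S.uB3r S.uA2l
lemma m11_7 : S.b 11 * S.b 7 = 0 := by
  rw [S.hb7, S.hb11]; exact S.z21 _ _ S.uB3r S.uASl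
lemma m11_8 : S.b 11 * S.b 8 = 0 := by
  rw [S.hb8, S.hb11]; exact S.pB3B2
lemma m11_9 : S.b 11 * S.b 9 = 0 := by
  rw [S.hb9, S.hb11]; exact S.pB3GA
lemma m11_10 : S.b 11 * S.b 10 = 0 := by
  rw [S.hb10, S.hb11]; exact S.z21 _ _ S.uB3r S.uA3l
lemma m11_11 : S.b 11 * S.b 11 = 0 := by
  rw [S.hb11]; exact S.pB3B3
lemma row0 (y : Λ) : S.b 0 * y = S.b.repr y 0 • (S.b 0) + S.b.repr y 2 • (S.b 2) + S.b.repr y 4 • (S.b 4) + S.b.repr y 6 • (S.b 6) + S.b.repr y 7 • (S.b 7) + S.b.repr y 10 • (S.b 10) := by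
  conv_lhs => rw [← S.b.sum_repr y, Finset.mul_sum]
  rw [sum12]
  simp only [mul_smul_comm, S.m0_0, S.m0_1, S.m0_2, S.m0_3, S.m0_4, S.m0_5, S.m0_6, S.m0_7, S.m0_8, S.m0_9, S.m0_10, S.m0_11, smul_zero, add_zero, zero_add]
  try module
lemma row1 (y : Λ) : S.b 1 * y = S.b.repr y 1 • (S.b 1) + S.b.repr y 3 • (S.b 3) + S.b.repr y 5 • (S.b 5) + S.b.repr y 8 • (S.b 8) + S.b.repr y 9 • (S.b 9) + S.b.repr y 11 • (S.b 11) := by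
  conv_lhs => rw [← S.b.sum_repr y, Finset.mul_sum]
  rw [sum12]
  simp only [mul_smul_comm, S.m1_0, S.m1_1, S.m1_2, S.m1_3, S.m1_4, S.m1_5, S.m1_6, S.m1_7, S.m1_8, S.m1_9, S.m1_10, S.m1_11, smul_zero, add_zero, zero_add]
  try module
lemma row2 (y : Λ) : S.b 2 * y = S.b.repr y 0 • (S.b 2) + S.b.repr y 2 • (S.b 6) + S.b.repr y 4 • (S.b 7) + S.b.repr y 6 • (S.b 10) := by
  conv_lhs => rw [← S.b.sum_repr y, Finset.mul_sum]
  rw [sum12]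
  simp only [mul_smul_comm, S.m2_0, S.m2_1, S.m2_2, S.m2_3, S.m2_4, S.m2_5, S.m2_6, S.m2_7, S.m2_8, S.m2_9, S.m2_10, S.m2_11, smul_zero, add_zero, zero_add]
  try module
lemma row3 (y : Λ) : S.b 3 * y = S.b.repr y 1 • (S.b 3) + S.b.repr y 3 • (S.b 8) + S.b.repr y 5 • (S.b 9) + S.b.repr y 8 • (S.b 11) := by
  conv_lhs => rw [← S.b.sum_repr y, Finset.mul_sum]
  rw [sum12]
  simp only [mul_smul_comm, S.m3_0, S.m3_1, S.m3_2, S.m3_3, S.m3_4, S.m3_5, S.m3_6, S.m3_7, S.m3_8, S.m3_9, S.m3_10, S.m3_11, smul_zero, add_zero, zero_add]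
  try module
lemma row4 (y : Λ) : S.b 4 * y = S.b.repr y 1 • (S.b 4) + S.b.repr y 3 • (S.b 7) + S.b.repr y 5 • (S.b 6 - S.ε • S.b 10) + S.b.repr y 9 • (S.b 10) := by
  conv_lhs => rw [← S.b.sum_repr y, Finset.mul_sum]
  rw [sum12]
  simp only [mul_smul_comm, S.m4_0, S.m4_1, S.m4_2, S.m4_3, S.m4_4, S.m4_5, S.m4_6, S.m4_7, S.m4_8, S.m4_9, S.m4_10, S.m4_11, smul_zero, add_zero, zero_add]
  try module
lemma row5 (y : Λ) : S.b 5 * y = S.b.repr y 0 • (S.b 5) + S.b.repr y 2 • (S.b 9) + S.b.repr y 4 • (S.t • S.b 8) + S.b.repr y 7 • (S.t • S.b 11) := by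
  conv_lhs => rw [← S.b.sum_repr y, Finset.mul_sum]
  rw [sum12]
  simp only [mul_smul_comm, S.m5_0, S.m5_1, S.m5_2, S.m5_3, S.m5_4, S.m5_5, S.m5_6, S.m5_7, S.m5_8, S.m5_9, S.m5_10, S.m5_11, smul_zero, add_zero, zero_add]
  try module
lemma row6 (y : Λ) : S.b 6 * y = S.b.repr y 0 • (S.b 6) + S.b.repr y 2 • (S.b 10) := by
  conv_lhs => rw [← S.b.sum_repr y, Finset.mul_sum]
  rw [sum12]
  simp only [mul_smul_comm, S.m6_0, S.m6_1, S.m6_2, S.m6_3, S.m6_4, S.m6_5, S.m6_6, S.m6_7, S.m6_8, S.m6_9, S.m6_10, S.m6_11, smul_zero, add_zero, zero_add]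
  try module
lemma row7 (y : Λ) : S.b 7 * y = S.b.repr y 1 • (S.b 7) + S.b.repr y 5 • (S.b 10) := by
  conv_lhs => rw [← S.b.sum_repr y, Finset.mul_sum]
  rw [sum12]
  simp only [mul_smul_comm, S.m7_0, S.m7_1, S.m7_2, S.m7_3, S.m7_4, S.m7_5, S.m7_6, S.m7_7, S.m7_8, S.m7_9, S.m7_10, S.m7_11, smul_zero, add_zero, zero_add]
  try module
lemma row8 (y : Λ) : S.b 8 * y = S.b.repr y 1 • (S.b 8) + S.b.repr y 3 • (S.b 11) := by
  conv_lhs => rw [← S.b.sum_repr y, Finset.mul_sum]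
  rw [sum12]
  simp only [mul_smul_comm, S.m8_0, S.m8_1, S.m8_2, S.m8_3, S.m8_4, S.m8_5, S.m8_6, S.m8_7, S.m8_8, S.m8_9, S.m8_10, S.m8_11, smul_zero, add_zero, zero_add]
  try module
lemma row9 (y : Λ) : S.b 9 * y = S.b.repr y 0 • (S.b 9) + S.b.repr y 4 • (S.t • S.b 11) := by
  conv_lhs => rw [← S.b.sum_repr y, Finset.mul_sum]
  rw [sum12]
  simp only [mul_smul_comm, S.m9_0, S.m9_1, S.m9_2, S.m9_3, S.m9_4, S.m9_5, S.m9_6, S.m9_7, S.m9_8, S.m9_9, S.m9_10, S.m9_11, smul_zero, add_zero, zero_add]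
  try module
lemma row10 (y : Λ) : S.b 10 * y = S.b.repr y 0 • (S.b 10) := by
  conv_lhs => rw [← S.b.sum_repr y, Finset.mul_sum]
  rw [sum12]
  simp only [mul_smul_comm, S.m10_0, S.m10_1, S.m10_2, S.m10_3, S.m10_4, S.m10_5, S.m10_6, S.m10_7, S.m10_8, S.m10_9, S.m10_10, S.m10_11, smul_zero, add_zero, zero_add]
  try module
lemma row11 (y : Λ) : S.b 11 * y = S.b.repr y 1 • (S.b 11) := by
  conv_lhs => rw [← S.b.sum_repr y, Finset.mul_sum]
  rw [sum12]
  simp only [mul_smul_comm, S.m11_0, S.m11_1, S.m11_2, S.m11_3, S.m11_4, S.m11_5, S.m11_6, S.m11_7, S.m11_8, S.m11_9, S.m11_10, S.m11_11, smul_zero, add_zero, zero_add]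
  try module
lemma col0 (y : Λ) : y * S.b 0 = S.b.repr y 0 • (S.b 0) + S.b.repr y 2 • (S.b 2) + S.b.repr y 5 • (S.b 5) + S.b.repr y 6 • (S.b 6) + S.b.repr y 9 • (S.b 9) + S.b.repr y 10 • (S.b 10) := by
  conv_lhs => rw [← S.b.sum_repr y, Finset.sum_mul]
  rw [sum12]
  simp only [smul_mul_assoc, S.m0_0, S.m1_0, S.m2_0, S.m3_0, S.m4_0, S.m5_0, S.m6_0, S.m7_0, S.m8_0, S.m9_0, S.m10_0, S.m11_0, smul_zero, add_zero, zero_add]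
  try module
lemma col1 (y : Λ) : y * S.b 1 = S.b.repr y 1 • (S.b 1) + S.b.repr y 3 • (S.b 3) + S.b.repr y 4 • (S.b 4) + S.b.repr y 7 • (S.b 7) + S.b.repr y 8 • (S.b 8) + S.b.repr y 11 • (S.b 11) := by
  conv_lhs => rw [← S.b.sum_repr y, Finset.sum_mul]
  rw [sum12]
  simp only [smul_mul_assoc, S.m0_1, S.m1_1, S.m2_1, S.m3_1, S.m4_1, S.m5_1, S.m6_1, S.m7_1, S.m8_1, S.m9_1, S.m10_1, S.m11_1, smul_zero, add_zero, zero_add]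
  try module
lemma col2 (y : Λ) : y * S.b 2 = S.b.repr y 0 • (S.b 2) + S.b.repr y 2 • (S.b 6) + S.b.repr y 5 • (S.b 9) + S.b.repr y 6 • (S.b 10) := by
  conv_lhs => rw [← S.b.sum_repr y, Finset.sum_mul]
  rw [sum12]
  simp only [smul_mul_assoc, S.m0_2, S.m1_2, S.m2_2, S.m3_2, S.m4_2, S.m5_2, S.m6_2, S.m7_2, S.m8_2, S.m9_2, S.m10_2, S.m11_2, smul_zero, add_zero, zero_add]
  try module
lemma col3 (y : Λ) : y * S.b 3 = S.b.repr y 1 • (S.b 3) + S.b.repr y 3 • (S.b 8) + S.b.repr y 4 • (S.b 7) + S.b.repr y 8 • (S.b 11) := by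
  conv_lhs => rw [← S.b.sum_repr y, Finset.sum_mul]
  rw [sum12]
  simp only [smul_mul_assoc, S.m0_3, S.m1_3, S.m2_3, S.m3_3, S.m4_3, S.m5_3, S.m6_3, S.m7_3, S.m8_3, S.m9_3, S.m10_3, S.m11_3, smul_zero, add_zero, zero_add]
  try module
lemma col4 (y : Λ) : y * S.b 4 = S.b.repr y 0 • (S.b 4) + S.b.repr y 2 • (S.b 7) + S.b.repr y 5 • (S.t • S.b 8) + S.b.repr y 9 • (S.t • S.b 11) := by
  conv_lhs => rw [← S.b.sum_repr y, Finset.sum_mul]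
  rw [sum12]
  simp only [smul_mul_assoc, S.m0_4, S.m1_4, S.m2_4, S.m3_4, S.m4_4, S.m5_4, S.m6_4, S.m7_4, S.m8_4, S.m9_4, S.m10_4, S.m11_4, smul_zero, add_zero, zero_add]
  try module
lemma col5 (y : Λ) : y * S.b 5 = S.b.repr y 1 • (S.b 5) + S.b.repr y 3 • (S.b 9) + S.b.repr y 4 • (S.b 6 - S.ε • S.b 10) + S.b.repr y 7 • (S.b 10) := by
  conv_lhs => rw [← S.b.sum_repr y, Finset.sum_mul]
  rw [sum12]
  simp only [smul_mul_assoc, S.m0_5, S.m1_5, S.m2_5, S.m3_5, S.m4_5, S.m5_5, S.m6_5, S.m7_5, S.m8_5, S.m9_5, S.m10_5, S.m11_5, smul_zero, add_zero, zero_add]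
  try module
lemma col6 (y : Λ) : y * S.b 6 = S.b.repr y 0 • (S.b 6) + S.b.repr y 2 • (S.b 10) := by
  conv_lhs => rw [← S.b.sum_repr y, Finset.sum_mul]
  rw [sum12]
  simp only [smul_mul_assoc, S.m0_6, S.m1_6, S.m2_6, S.m3_6, S.m4_6, S.m5_6, S.m6_6, S.m7_6, S.m8_6, S.m9_6, S.m10_6, S.m11_6, smul_zero, add_zero, zero_add]
  try module
lemma col7 (y : Λ) : y * S.b 7 = S.b.repr y 0 • (S.b 7) + S.b.repr y 5 • (S.t • S.b 11) := by
  conv_lhs => rw [← S.b.sum_repr y, Finset.sum_mul]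
  rw [sum12]
  simp only [smul_mul_assoc, S.m0_7, S.m1_7, S.m2_7, S.m3_7, S.m4_7, S.m5_7, S.m6_7, S.m7_7, S.m8_7, S.m9_7, S.m10_7, S.m11_7, smul_zero, add_zero, zero_add]
  try module
lemma col8 (y : Λ) : y * S.b 8 = S.b.repr y 1 • (S.b 8) + S.b.repr y 3 • (S.b 11) := by
  conv_lhs => rw [← S.b.sum_repr y, Finset.sum_mul]
  rw [sum12]
  simp only [smul_mul_assoc, S.m0_8, S.m1_8, S.m2_8, S.m3_8, S.m4_8, S.m5_8, S.m6_8, S.m7_8, S.m8_8, S.m9_8, S.m10_8, S.m11_8, smul_zero, add_zero, zero_add]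
  try module
lemma col9 (y : Λ) : y * S.b 9 = S.b.repr y 1 • (S.b 9) + S.b.repr y 4 • (S.b 10) := by
  conv_lhs => rw [← S.b.sum_repr y, Finset.sum_mul]
  rw [sum12]
  simp only [smul_mul_assoc, S.m0_9, S.m1_9, S.m2_9, S.m3_9, S.m4_9, S.m5_9, S.m6_9, S.m7_9, S.m8_9, S.m9_9, S.m10_9, S.m11_9, smul_zero, add_zero, zero_add]
  try module
lemma col10 (y : Λ) : y * S.b 10 = S.b.repr y 0 • (S.b 10) := by
  conv_lhs => rw [← S.b.sum_repr y, Finset.sum_mul]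
  rw [sum12]
  simp only [smul_mul_assoc, S.m0_10, S.m1_10, S.m2_10, S.m3_10, S.m4_10, S.m5_10, S.m6_10, S.m7_10, S.m8_10, S.m9_10, S.m10_10, S.m11_10, smul_zero, add_zero, zero_add]
  try module
lemma col11 (y : Λ) : y * S.b 11 = S.b.repr y 1 • (S.b 11) := by
  conv_lhs => rw [← S.b.sum_repr y, Finset.sum_mul]
  rw [sum12]
  simp only [smul_mul_assoc, S.m0_11, S.m1_11, S.m2_11, S.m3_11, S.m4_11, S.m5_11, S.m6_11, S.m7_11, S.m8_11, S.m9_11, S.m10_11, S.m11_11, smul_zero, add_zero, zero_add]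
  try module
lemma c0mul (x y : Λ) : S.b.coord 0 (x * y) = S.b.repr x 0 * S.b.repr y 0 := by
  conv_lhs => rw [← S.b.sum_repr x, Finset.sum_mul]
  rw [map_sum, sum12]
  simp only [smul_mul_assoc, map_smul, S.row0, S.row1, S.row2, S.row3, S.row4, S.row5, S.row6, S.row7, S.row8, S.row9, S.row10, S.row11]
  simp only [map_add, map_sub, map_smul, Module.Basis.coord_apply, Module.Basis.repr_self_apply, smul_eq_mul]
  simp
  try ring
lemma c1mul (x y : Λ) : S.b.coord 1 (x * y) = S.b.repr x 1 * S.b.repr y 1 := by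
  conv_lhs => rw [← S.b.sum_repr x, Finset.sum_mul]
  rw [map_sum, sum12]
  simp only [smul_mul_assoc, map_smul, S.row0, S.row1, S.row2, S.row3, S.row4, S.row5, S.row6, S.row7, S.row8, S.row9, S.row10, S.row11]
  simp only [map_add, map_sub, map_smul, Module.Basis.coord_apply, Module.Basis.repr_self_apply, smul_eq_mul]
  simp
  try ring
lemma c6mul (x y : Λ) : S.b.coord 6 (x * y) = S.b.repr x 0 * S.b.repr y 6 + S.b.repr x 2 * S.b.repr y 2 + S.b.repr x 4 * S.b.repr y 5 + S.b.repr x 6 * S.b.repr y 0 := by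
  conv_lhs => rw [← S.b.sum_repr x, Finset.sum_mul]
  rw [map_sum, sum12]
  simp only [smul_mul_assoc, map_smul, S.row0, S.row1, S.row2, S.row3, S.row4, S.row5, S.row6, S.row7, S.row8, S.row9, S.row10, S.row11]
  simp only [map_add, map_sub, map_smul, Module.Basis.coord_apply, Module.Basis.repr_self_apply, smul_eq_mul]
  simp
  try ring
lemma c8mul (x y : Λ) : S.b.coord 8 (x * y) = S.b.repr x 1 * S.b.repr y 8 + S.b.repr x 3 * S.b.repr y 3 + S.t * (S.b.repr x 5 * S.b.repr y 4) + S.b.repr x 8 * S.b.repr y 1 := by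
  conv_lhs => rw [← S.b.sum_repr x, Finset.sum_mul]
  rw [map_sum, sum12]
  simp only [smul_mul_assoc, map_smul, S.row0, S.row1, S.row2, S.row3, S.row4, S.row5, S.row6, S.row7, S.row8, S.row9, S.row10, S.row11]
  simp only [map_add, map_sub, map_smul, Module.Basis.coord_apply, Module.Basis.repr_self_apply, smul_eq_mul]
  simp
  try ring
lemma c10mul (x y : Λ) : S.b.coord 10 (x * y) = S.b.repr x 0 * S.b.repr y 10 + S.b.repr x 2 * S.b.repr y 6 + -S.ε * (S.b.repr x 4 * S.b.repr y 5) + S.b.repr x 4 * S.b.repr y 9 + S.b.repr x 6 * S.b.repr y 2 + S.b.repr x 7 * S.b.repr y 5 + S.b.repr x 10 * S.b.repr y 0 := by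
  conv_lhs => rw [← S.b.sum_repr x, Finset.sum_mul]
  rw [map_sum, sum12]
  simp only [smul_mul_assoc, map_smul, S.row0, S.row1, S.row2, S.row3, S.row4, S.row5, S.row6, S.row7, S.row8, S.row9, S.row10, S.row11]
  simp only [map_add, map_sub, map_smul, Module.Basis.coord_apply, Module.Basis.repr_self_apply, smul_eq_mul]
  simp
  try ring
lemma c11mul (x y : Λ) : S.b.coord 11 (x * y) = S.b.repr x 1 * S.b.repr y 11 + S.b.repr x 3 * S.b.repr y 8 + S.t * (S.b.repr x 5 * S.b.repr y 7) + S.b.repr x 8 * S.b.repr y 3 + S.t * (S.b.repr x 9 * S.b.repr y 4) + S.b.repr x 11 * S.b.repr y 1 := by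
  conv_lhs => rw [← S.b.sum_repr x, Finset.sum_mul]
  rw [map_sum, sum12]
  simp only [smul_mul_assoc, map_smul, S.row0, S.row1, S.row2, S.row3, S.row4, S.row5, S.row6, S.row7, S.row8, S.row9, S.row10, S.row11]
  simp only [map_add, map_sub, map_smul, Module.Basis.coord_apply, Module.Basis.repr_self_apply, smul_eq_mul]
  simp
  try ring

/-! ## the symmetrizing form -/

noncomputable def psi : Λ →ₗ[K] K := S.b.coord 10 + S.ε • S.b.coord 6 + S.t⁻¹ • S.b.coord 11

lemma psi_apply (v : Λ) :
    S.psi v = S.b.repr v 10 + S.ε * S.b.repr v 6 + S.t⁻¹ * S.b.repr v 11 := rfl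

lemma psib (j : Fin 12) : S.psi (S.b j) =
    S.b.repr (S.b j) 10 + S.ε * S.b.repr (S.b j) 6 + S.t⁻¹ * S.b.repr (S.b j) 11 := rfl

lemma psicol2 (y : Λ) : S.psi (y * S.b 2) = S.ε * S.b.repr y 2 + S.b.repr y 6 := by
  rw [S.col2]
  simp [psi_apply, map_add, map_smul, Module.Basis.repr_self_apply]
  try field_simp [S.ht]
  try ring
lemma psicol3 (y : Λ) : S.psi (y * S.b 3) = S.t⁻¹ * S.b.repr y 8 := by
  rw [S.col3]
  simp [psi_apply, map_add, map_smul, Module.Basis.repr_self_apply]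
  try field_simp [S.ht]
  try ring
lemma psicol4 (y : Λ) : S.psi (y * S.b 4) = S.b.repr y 9 := by
  rw [S.col4]
  simp [psi_apply, map_add, map_smul, Module.Basis.repr_self_apply, smul_smul]
  try field_simp [S.ht]
  try ring
lemma psicol5 (y : Λ) : S.psi (y * S.b 5) = S.b.repr y 7 := by
  rw [S.col5]
  simp [psi_apply, map_add, map_sub, map_smul, Module.Basis.repr_self_apply, smul_sub, smul_smul]
  try field_simp [S.ht]
  try ring
lemma psicol6 (y : Λ) : S.psi (y * S.b 6) = S.ε * S.b.repr y 0 + S.b.repr y 2 := by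
  rw [S.col6]
  simp [psi_apply, map_add, map_smul, Module.Basis.repr_self_apply]
  try field_simp [S.ht]
  try ring
lemma psicol7 (y : Λ) : S.psi (y * S.b 7) = S.b.repr y 5 := by
  rw [S.col7]
  simp [psi_apply, map_add, map_smul, Module.Basis.repr_self_apply, smul_smul]
  try field_simp [S.ht]
  try ring
lemma psicol8 (y : Λ) : S.psi (y * S.b 8) = S.t⁻¹ * S.b.repr y 3 := by
  rw [S.col8]
  simp [psi_apply, map_add, map_smul, Module.Basis.repr_self_apply]
  try field_simp [S.ht]
  try ring
lemma psicol9 (y : Λ) : S.psi (y * S.b 9) = S.b.repr y 4 := by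
  rw [S.col9]
  simp [psi_apply, map_add, map_smul, Module.Basis.repr_self_apply]
  try field_simp [S.ht]
  try ring
lemma psicol10 (y : Λ) : S.psi (y * S.b 10) = S.b.repr y 0 := by
  rw [S.col10]
  simp [psi_apply, map_add, map_smul, Module.Basis.repr_self_apply]
  try field_simp [S.ht]
  try ring
lemma psicol11 (y : Λ) : S.psi (y * S.b 11) = S.t⁻¹ * S.b.repr y 1 := by
  rw [S.col11]
  simp [psi_apply, map_add, map_smul, Module.Basis.repr_self_apply]
  try field_simp [S.ht]
  try ring

lemma psirow6 (y : Λ) : S.psi (S.b 6 * y) = S.ε * S.b.repr y 0 + S.b.repr y 2 := by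
  rw [S.row6]
  simp [psi_apply, map_add, map_smul, Module.Basis.repr_self_apply]
  try field_simp [S.ht]
  try ring
lemma psirow8 (y : Λ) : S.psi (S.b 8 * y) = S.t⁻¹ * S.b.repr y 3 := by
  rw [S.row8]
  simp [psi_apply, map_add, map_smul, Module.Basis.repr_self_apply]
  try field_simp [S.ht]
  try ring
lemma psirow10 (y : Λ) : S.psi (S.b 10 * y) = S.b.repr y 0 := by
  rw [S.row10]
  simp [psi_apply, map_add, map_smul, Module.Basis.repr_self_apply]
  try field_simp [S.ht]
  try ring
lemma psirow11 (y : Λ) : S.psi (S.b 11 * y) = S.t⁻¹ * S.b.repr y 1 := by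
  rw [S.row11]
  simp [psi_apply, map_add, map_smul, Module.Basis.repr_self_apply]
  try field_simp [S.ht]
  try ring

end Setup

/-! ## the commutator subspace -/

variable (K : Type*) [Field K] (Λ : Type*) [Ring Λ] [Algebra K Λ]

def Kspan : Submodule K Λ := Submodule.span K {x : Λ | ∃ u v : Λ, x = u * v - v * u}

variable {K Λ}

lemma hker {x : Λ} (hx : x ∈ Kspan K Λ) (F : Λ →ₗ[K] K)
    (hF : ∀ u v : Λ, F (u * v) = F (v * u)) : F x = 0 := by
  have hle : Kspan K Λ ≤ LinearMap.ker F := by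
    rw [Kspan, Submodule.span_le]
    rintro w ⟨u, v, rfl⟩
    simp [LinearMap.mem_ker, map_sub, hF u v]
  exact hle hx

lemma two0 [CharP K 2] : (2 : K) = 0 := by
  have := CharP.cast_eq_zero K 2
  exact_mod_cast this

lemma addself (K : Type*) {Λ : Type*} [Field K] [CharP K 2] [Ring Λ] [Algebra K Λ]
    (v : Λ) : v + v = 0 := by
  rw [← two_smul K v, two0, zero_smul]

namespace Setup

variable {K : Type*} [Field K] {Λ : Type*} [Ring Λ] [Algebra K Λ] (S : Setup K Λ)


lemma sq0 (x : Λ) (hx : x ^ 2 ∈ Kspan K Λ) : S.b.repr x 0 = 0 := by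
  have h := hker hx (S.b.coord 0) (fun u v => by rw [S.c0mul, S.c0mul]; ring)
  rw [pow_two, S.c0mul] at h
  exact mul_self_eq_zero.mp h

lemma sq1 (x : Λ) (hx : x ^ 2 ∈ Kspan K Λ) : S.b.repr x 1 = 0 := by
  have h := hker hx (S.b.coord 1) (fun u v => by rw [S.c1mul, S.c1mul]; ring)
  rw [pow_two, S.c1mul] at h
  exact mul_self_eq_zero.mp h

lemma sqD [CharP K 2] (x : Λ) (hx : x ^ 2 ∈ Kspan K Λ) :
    S.b.repr x 3 * S.b.repr x 3 = S.t * (S.b.repr x 2 * S.b.repr x 2) := by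
  have h2 : (2 : K) = 0 := two0
  have h := hker hx (S.t • S.b.coord 6 - S.b.coord 8) (fun u v => by
    simp only [LinearMap.sub_apply, LinearMap.smul_apply, smul_eq_mul, S.c6mul, S.c8mul]
    linear_combination (S.t * (S.b.repr u 4 * S.b.repr v 5 - S.b.repr u 5 * S.b.repr v 4)) * h2)
  rw [pow_two] at h
  simp only [LinearMap.sub_apply, LinearMap.smul_apply, smul_eq_mul, S.c6mul, S.c8mul] at h
  linear_combination (-1 : K) * h +
    (S.t * (S.b.repr x 0 * S.b.repr x 6) - S.b.repr x 1 * S.b.repr x 8) * h2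

lemma sqE [CharP K 2] (x : Λ) (hx : x ^ 2 ∈ Kspan K Λ) :
    S.t * S.ε * (S.b.repr x 2 * S.b.repr x 2) = 0 := by
  have h2 : (2 : K) = 0 := two0
  have h := hker hx (S.t • S.b.coord 10 + (S.t * S.ε) • S.b.coord 6 - S.b.coord 11) (fun u v => by
    simp only [LinearMap.sub_apply, LinearMap.add_apply, LinearMap.smul_apply, smul_eq_mul,
      S.c10mul, S.c6mul, S.c11mul]
    linear_combination (S.t * (S.b.repr u 4 * S.b.repr v 9 - S.b.repr u 9 * S.b.repr v 4
      + S.b.repr u 7 * S.b.repr v 5 - S.b.repr u 5 * S.b.repr v 7)) * h2)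
  rw [pow_two] at h
  simp only [LinearMap.sub_apply, LinearMap.add_apply, LinearMap.smul_apply, smul_eq_mul,
    S.c10mul, S.c6mul, S.c11mul] at h
  linear_combination h + (- (S.t * (S.b.repr x 0 * S.b.repr x 10))
    - S.t * (S.b.repr x 2 * S.b.repr x 6) - S.t * S.ε * (S.b.repr x 0 * S.b.repr x 6)
    + S.b.repr x 1 * S.b.repr x 11 + S.b.repr x 3 * S.b.repr x 8) * h2

lemma sq_basis (i : Fin 12) (h : S.b i * S.b i = 0) : (S.b i) ^ 2 ∈ Kspan K Λ := by
  rw [pow_two, h]; exact zero_mem _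

end Setup

namespace Setup

variable {K : Type*} [Field K] {Λ : Type*} [Ring Λ] [Algebra K Λ] (S : Setup K Λ)

lemma tinv0 {c : K} (h : S.t⁻¹ * c = 0) : c = 0 := by
  rcases mul_eq_zero.mp h with h' | h'
  · exact absurd (inv_eq_zero.mp h') S.ht
  · exact h'

lemma perp_tests {a : Λ}
    (ha : ∀ x : Λ, x ^ 2 ∈ Kspan K Λ → S.psi (a * x) = 0) :
    S.b.repr a 9 = 0 ∧ S.b.repr a 7 = 0 ∧ S.b.repr a 5 = 0 ∧ S.b.repr a 4 = 0 ∧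
    S.b.repr a 0 = 0 ∧ S.b.repr a 1 = 0 ∧ S.b.repr a 3 = 0 ∧
    S.ε * S.b.repr a 0 + S.b.repr a 2 = 0 := by
  have t4 := ha (S.b 4) (S.sq_basis 4 S.m4_4); rw [S.psicol4] at t4
  have t5 := ha (S.b 5) (S.sq_basis 5 S.m5_5); rw [S.psicol5] at t5
  have t7 := ha (S.b 7) (S.sq_basis 7 S.m7_7); rw [S.psicol7] at t7
  have t9 := ha (S.b 9) (S.sq_basis 9 S.m9_9); rw [S.psicol9] at t9
  have t6 := ha (S.b 6) (S.sq_basis 6 S.m6_6); rw [S.psicol6] at t6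
  have t8 := ha (S.b 8) (S.sq_basis 8 S.m8_8); rw [S.psicol8] at t8
  have t10 := ha (S.b 10) (S.sq_basis 10 S.m10_10); rw [S.psicol10] at t10
  have t11 := ha (S.b 11) (S.sq_basis 11 S.m11_11); rw [S.psicol11] at t11
  exact ⟨t4, t5, t7, t9, t10, S.tinv0 t11, S.tinv0 t8, t6⟩

lemma perp1 [CharP K 2] (hε : S.ε = 1) :
    {a : Λ | ∀ x : Λ, x ^ 2 ∈ Kspan K Λ → S.psi (a * x) = 0} =
      (Submodule.span K {S.b 6, S.b 8, S.b 10, S.b 11} : Set Λ) := by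
  ext a
  simp only [Set.mem_setOf_eq, SetLike.mem_coe]
  constructor
  · intro ha
    obtain ⟨h9, h7, h5, h4, h0, h1, h3, h6'⟩ := S.perp_tests ha
    have h2' : S.b.repr a 2 = 0 := by rw [h0, mul_zero, zero_add] at h6'; exact h6'
    have expand : a = S.b.repr a 6 • S.b 6 + S.b.repr a 8 • S.b 8 +
        S.b.repr a 10 • S.b 10 + S.b.repr a 11 • S.b 11 := by
      conv_lhs => rw [← S.b.sum_repr a]
      rw [sum12, h0, h1, h2', h3, h4, h5, h7, h9]
      simp only [zero_smul, zero_add, add_zero]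
    rw [expand]
    refine add_mem (add_mem (add_mem ?_ ?_) ?_) ?_ <;>
      exact Submodule.smul_mem _ _ (Submodule.subset_span (by simp))
  · intro ha x hx
    have h0 := S.sq0 x hx
    have h1 := S.sq1 x hx
    have hD := S.sqD x hx
    have hE := S.sqE x hx
    have hx2 : S.b.repr x 2 = 0 := by
      rw [hε, mul_one] at hE
      rcases mul_eq_zero.mp hE with h | h
      · exact absurd h S.ht
      · exact mul_self_eq_zero.mp h
    have hx3 : S.b.repr x 3 = 0 := by
      rw [hx2, mul_zero, mul_zero] at hD
      exact mul_self_eq_zero.mp hD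
    induction ha using Submodule.span_induction with
    | mem w hw =>
      simp only [Set.mem_insert_iff, Set.mem_singleton_iff] at hw
      rcases hw with rfl | rfl | rfl | rfl
      · rw [S.psirow6, h0, hx2, mul_zero, add_zero]
      · rw [S.psirow8, hx3, mul_zero]
      · rw [S.psirow10, h0]
      · rw [S.psirow11, h1, mul_zero]
    | zero => rw [zero_mul, map_zero]
    | add u v _ _ hu hv => rw [add_mul, map_add, hu, hv, add_zero]
    | smul c u _ hu => rw [smul_mul_assoc, map_smul, hu, smul_zero]

lemma perp0 [CharP K 2] (hε : S.ε = 0) (m : K) (hm : m ^ 2 = S.t) :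
    {a : Λ | ∀ x : Λ, x ^ 2 ∈ Kspan K Λ → S.psi (a * x) = 0} =
      (Submodule.span K {S.b 6 + m • S.b 8, S.b 10, S.b 11} : Set Λ) := by
  have h2 : (2 : K) = 0 := two0
  have hm0 : m ≠ 0 := fun h => S.ht (by rw [← hm, h]; ring)
  ext a
  simp only [Set.mem_setOf_eq, SetLike.mem_coe]
  constructor
  · intro ha
    obtain ⟨h9, h7, h5, h4, h0, h1, h3, h6'⟩ := S.perp_tests ha
    have h2' : S.b.repr a 2 = 0 := by rw [hε, zero_mul, zero_add] at h6'; exact h6'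
    have hsq : (S.b 2 + m • S.b 3) ^ 2 = S.b 4 * S.b 5 - S.b 5 * S.b 4 := by
      have e1 : (S.b 2 + m • S.b 3) ^ 2 = S.b 6 + S.t • S.b 8 := by
        rw [pow_two, add_mul, mul_add, mul_add]
        simp only [smul_mul_assoc, mul_smul_comm, S.m2_2, S.m2_3, S.m3_2, S.m3_3,
          smul_zero, add_zero, zero_add, smul_smul]
        rw [show m * m = S.t from by rw [← hm]; ring]
      rw [S.m4_5, S.m5_4, hε, zero_smul, sub_zero, e1, sub_eq_add_neg,
        neg_eq_iff_add_eq_zero.mpr (addself K _)]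
    have hmem : (S.b 2 + m • S.b 3) ^ 2 ∈ Kspan K Λ := by
      rw [hsq]; exact Submodule.subset_span ⟨S.b 4, S.b 5, rfl⟩
    have tX := ha _ hmem
    rw [mul_add, mul_smul_comm, map_add, map_smul, S.psicol2, S.psicol3, smul_eq_mul, hε,
      zero_mul, zero_add] at tX
    have tX' : S.t * S.b.repr a 6 + m * S.b.repr a 8 = 0 := by
      have e := congrArg (S.t * ·) tX
      simp only [mul_zero] at e
      calc S.t * S.b.repr a 6 + m * S.b.repr a 8
          = S.t * (S.b.repr a 6 + m * (S.t⁻¹ * S.b.repr a 8)) := by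
            field_simp [S.ht]
            try ring
        _ = 0 := e
    have h8 : S.b.repr a 8 = m * S.b.repr a 6 := by
      have hmm : m * (m * S.b.repr a 6 + S.b.repr a 8) = 0 := by
        linear_combination tX' + S.b.repr a 6 * hm
      have h68 := (mul_eq_zero.mp hmm).resolve_left hm0
      linear_combination h68 - (m * S.b.repr a 6) * h2
    have expand : a = S.b.repr a 6 • (S.b 6 + m • S.b 8) +
        S.b.repr a 10 • S.b 10 + S.b.repr a 11 • S.b 11 := by
      conv_lhs => rw [← S.b.sum_repr a]
      rw [sum12, h0, h1, h2', h3, h4, h5, h7, h9, h8]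
      simp only [zero_smul, zero_add, add_zero, smul_add, smul_smul]
      module
    rw [expand]
    refine add_mem (add_mem ?_ ?_) ?_ <;>
      exact Submodule.smul_mem _ _ (Submodule.subset_span (by simp))
  · intro ha x hx
    have h0 := S.sq0 x hx
    have h1 := S.sq1 x hx
    have hD := S.sqD x hx
    have h32 : S.b.repr x 3 = m * S.b.repr x 2 := by
      have hsq32 : (S.b.repr x 3 - m * S.b.repr x 2) ^ 2 = 0 := by
        linear_combination hD + (S.b.repr x 2 * S.b.repr x 2) * hm +
          (S.t * (S.b.repr x 2 * S.b.repr x 2) - m * S.b.repr x 2 * S.b.repr x 3) * h2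
      have := pow_eq_zero_iff (two_ne_zero) |>.mp hsq32
      exact sub_eq_zero.mp this
    induction ha using Submodule.span_induction with
    | mem w hw =>
      simp only [Set.mem_insert_iff, Set.mem_singleton_iff] at hw
      rcases hw with rfl | rfl | rfl
      · rw [add_mul, smul_mul_assoc, map_add, map_smul, S.psirow6, S.psirow8, hε, zero_mul,
          zero_add, smul_eq_mul, h32]
        have hh : m * (S.t⁻¹ * (m * S.b.repr x 2)) = S.b.repr x 2 := by
          rw [← hm]
          field_simp [hm0]
          try ring
        rw [hh]
        linear_combination S.b.repr x 2 * h2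
      · rw [S.psirow10, h0]
      · rw [S.psirow11, h1, mul_zero]
    | zero => rw [zero_mul, map_zero]
    | add u v _ _ hu hv => rw [add_mul, map_add, hu, hv, add_zero]
    | smul c u _ hu => rw [smul_mul_assoc, map_smul, hu, smul_zero]

end Setup

namespace Setup

variable {K : Type*} [Field K] {Λ : Type*} [Ring Λ] [Algebra K Λ] (S : Setup K Λ)

/-- generators of the center -/
noncomputable def Zg : Fin 6 → Λ :=
  ![S.b 0 + S.b 1, S.b 2 + S.b 3, S.b 6, S.b 8, S.b 10, S.b 11]

lemma one_eq : (1 : Λ) = S.b 0 + S.b 1 := by rw [S.hb0, S.hb1, S.hsum]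

lemma center_sub (z : Λ) (hz : z ∈ Subalgebra.center K Λ) :
    z ∈ Submodule.span K (Set.range S.Zg) := by
  rw [Subalgebra.mem_center_iff] at hz
  have h0 := hz (S.b 0)
  rw [S.row0, S.col0] at h0
  have e4 : S.b.repr z 4 = 0 := by
    have h := congrArg (S.b.coord 4) h0
    simp only [map_add, map_smul, map_sub, Module.Basis.coord_apply, Module.Basis.repr_self_apply] at h
    simp at h
    first | exact h | exact h.symm
  have e5 : S.b.repr z 5 = 0 := by
    have h := congrArg (S.b.coord 5) h0
    simp only [map_add, map_smul, map_sub, Module.Basis.coord_apply, Module.Basis.repr_self_apply] at h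
    simp at h
    first | exact h | exact h.symm
  have e7 : S.b.repr z 7 = 0 := by
    have h := congrArg (S.b.coord 7) h0
    simp only [map_add, map_smul, map_sub, Module.Basis.coord_apply, Module.Basis.repr_self_apply] at h
    simp at h
    first | exact h | exact h.symm
  have e9 : S.b.repr z 9 = 0 := by
    have h := congrArg (S.b.coord 9) h0
    simp only [map_add, map_smul, map_sub, Module.Basis.coord_apply, Module.Basis.repr_self_apply] at h
    simp at h
    first | exact h | exact h.symm
  have h4 := hz (S.b 4)
  rw [S.row4, S.col4] at h4
  have f4 : S.b.repr z 1 = S.b.repr z 0 := by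
    have h := congrArg (S.b.coord 4) h4
    simp only [map_add, map_smul, map_sub, Module.Basis.coord_apply, Module.Basis.repr_self_apply] at h
    simp at h
    first | exact h | exact h.symm
  have f7 : S.b.repr z 3 = S.b.repr z 2 := by
    have h := congrArg (S.b.coord 7) h4
    simp only [map_add, map_smul, map_sub, Module.Basis.coord_apply, Module.Basis.repr_self_apply] at h
    simp at h
    first | exact h | exact h.symm
  have hz6 : z = S.b.repr z 0 • (S.b 0 + S.b 1) + S.b.repr z 2 • (S.b 2 + S.b 3) +
      S.b.repr z 6 • S.b 6 + S.b.repr z 8 • S.b 8 +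
      S.b.repr z 10 • S.b 10 + S.b.repr z 11 • S.b 11 := by
    conv_lhs => rw [← S.b.sum_repr z]
    rw [sum12, e4, e5, e7, e9, f4, f7]
    simp only [zero_smul, add_zero, zero_add, smul_add]
    module
  rw [hz6]
  refine add_mem (add_mem (add_mem (add_mem (add_mem ?_ ?_) ?_) ?_) ?_) ?_
  · exact Submodule.smul_mem _ _ (Submodule.subset_span ⟨0, rfl⟩)
  · exact Submodule.smul_mem _ _ (Submodule.subset_span ⟨1, rfl⟩)
  · exact Submodule.smul_mem _ _ (Submodule.subset_span ⟨2, rfl⟩)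
  · exact Submodule.smul_mem _ _ (Submodule.subset_span ⟨3, rfl⟩)
  · exact Submodule.smul_mem _ _ (Submodule.subset_span ⟨4, rfl⟩)
  · exact Submodule.smul_mem _ _ (Submodule.subset_span ⟨5, rfl⟩)

lemma center_eq :
    Subalgebra.toSubmodule (Subalgebra.center K Λ) = Submodule.span K (Set.range S.Zg) := by
  apply le_antisymm
  · intro z hz
    exact S.center_sub z ((Subalgebra.mem_toSubmodule _).mp hz)
  · rw [Submodule.span_le]
    rintro w ⟨i, rfl⟩
    rw [SetLike.mem_coe, Subalgebra.mem_toSubmodule]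
    fin_cases i
    · show S.b 0 + S.b 1 ∈ _
      rw [← S.one_eq]
      exact one_mem _
    · show S.b 2 + S.b 3 ∈ _
      rw [Subalgebra.mem_center_iff]
      intro y
      rw [mul_add, add_mul, S.row2, S.row3, S.col2, S.col3]
      module
    · show S.b 6 ∈ _
      rw [Subalgebra.mem_center_iff]
      intro y
      rw [S.row6, S.col6]
    · show S.b 8 ∈ _
      rw [Subalgebra.mem_center_iff]
      intro y
      rw [S.row8, S.col8]
    · show S.b 10 ∈ _
      rw [Subalgebra.mem_center_iff]
      intro y
      rw [S.row10, S.col10]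
    · show S.b 11 ∈ _
      rw [Subalgebra.mem_center_iff]
      intro y
      rw [S.row11, S.col11]

lemma li_Zg : LinearIndependent K S.Zg := by
  rw [Fintype.linearIndependent_iff]
  intro gco hg
  rw [Fin.sum_univ_six] at hg
  simp only [show S.Zg 0 = S.b 0 + S.b 1 from rfl, show S.Zg 1 = S.b 2 + S.b 3 from rfl,
    show S.Zg 2 = S.b 6 from rfl, show S.Zg 3 = S.b 8 from rfl,
    show S.Zg 4 = S.b 10 from rfl, show S.Zg 5 = S.b 11 from rfl] at hg
  have k0 : gco 0 = 0 := by
    have h := congrArg (S.b.coord 0) hg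
    simp only [map_add, map_smul, Module.Basis.coord_apply, Module.Basis.repr_self_apply, map_zero] at h
    simpa using h
  have k1 : gco 1 = 0 := by
    have h := congrArg (S.b.coord 2) hg
    simp only [map_add, map_smul, Module.Basis.coord_apply, Module.Basis.repr_self_apply, map_zero] at h
    simpa using h
  have k2 : gco 2 = 0 := by
    have h := congrArg (S.b.coord 6) hg
    simp only [map_add, map_smul, Module.Basis.coord_apply, Module.Basis.repr_self_apply, map_zero] at h
    simpa using h
  have k3 : gco 3 = 0 := by
    have h := congrArg (S.b.coord 8) hg
    simp only [map_add, map_smul, Module.Basis.coord_apply, Module.Basis.repr_self_apply, map_zero] at h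
    simpa using h
  have k4 : gco 4 = 0 := by
    have h := congrArg (S.b.coord 10) hg
    simp only [map_add, map_smul, Module.Basis.coord_apply, Module.Basis.repr_self_apply, map_zero] at h
    simpa using h
  have k5 : gco 5 = 0 := by
    have h := congrArg (S.b.coord 11) hg
    simp only [map_add, map_smul, Module.Basis.coord_apply, Module.Basis.repr_self_apply, map_zero] at h
    simpa using h
  intro i
  fin_cases i <;> assumption

include S in
lemma finrank_center : Module.finrank K (Subalgebra.center K Λ) = 6 := by
  rw [← Subalgebra.finrank_toSubmodule, S.center_eq, finrank_span_eq_card S.li_Zg]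
  simp

lemma li3 (m : K) : LinearIndependent K ![S.b 6 + m • S.b 8, S.b 10, S.b 11] := by
  rw [Fintype.linearIndependent_iff]
  intro gco hg
  rw [Fin.sum_univ_three] at hg
  simp only [show (![S.b 6 + m • S.b 8, S.b 10, S.b 11]) 0 = S.b 6 + m • S.b 8 from rfl,
    show (![S.b 6 + m • S.b 8, S.b 10, S.b 11]) 1 = S.b 10 from rfl,
    show (![S.b 6 + m • S.b 8, S.b 10, S.b 11]) 2 = S.b 11 from rfl] at hg
  have k0 : gco 0 = 0 := by
    have h := congrArg (S.b.coord 6) hg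
    simp only [map_add, map_smul, Module.Basis.coord_apply, Module.Basis.repr_self_apply, map_zero] at h
    simpa using h
  have k1 : gco 1 = 0 := by
    have h := congrArg (S.b.coord 10) hg
    simp only [map_add, map_smul, Module.Basis.coord_apply, Module.Basis.repr_self_apply, map_zero] at h
    simpa using h
  have k2 : gco 2 = 0 := by
    have h := congrArg (S.b.coord 11) hg
    simp only [map_add, map_smul, Module.Basis.coord_apply, Module.Basis.repr_self_apply, map_zero] at h
    simpa using h
  intro i
  fin_cases i <;> assumption

lemma li4 : LinearIndependent K ![S.b 6, S.b 8, S.b 10, S.b 11] := by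
  rw [Fintype.linearIndependent_iff]
  intro gco hg
  rw [Fin.sum_univ_four] at hg
  simp only [show (![S.b 6, S.b 8, S.b 10, S.b 11]) 0 = S.b 6 from rfl,
    show (![S.b 6, S.b 8, S.b 10, S.b 11]) 1 = S.b 8 from rfl,
    show (![S.b 6, S.b 8, S.b 10, S.b 11]) 2 = S.b 10 from rfl,
    show (![S.b 6, S.b 8, S.b 10, S.b 11]) 3 = S.b 11 from rfl] at hg
  have k0 : gco 0 = 0 := by
    have h := congrArg (S.b.coord 6) hg
    simp only [map_add, map_smul, Module.Basis.coord_apply, Module.Basis.repr_self_apply, map_zero] at h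
    simpa using h
  have k1 : gco 1 = 0 := by
    have h := congrArg (S.b.coord 8) hg
    simp only [map_add, map_smul, Module.Basis.coord_apply, Module.Basis.repr_self_apply, map_zero] at h
    simpa using h
  have k2 : gco 2 = 0 := by
    have h := congrArg (S.b.coord 10) hg
    simp only [map_add, map_smul, Module.Basis.coord_apply, Module.Basis.repr_self_apply, map_zero] at h
    simpa using h
  have k3 : gco 3 = 0 := by
    have h := congrArg (S.b.coord 11) hg
    simp only [map_add, map_smul, Module.Basis.coord_apply, Module.Basis.repr_self_apply, map_zero] at h
    simpa using h
  intro i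
  fin_cases i <;> assumption

lemma fr3 (m : K) :
    Module.finrank K (Submodule.span K {S.b 6 + m • S.b 8, S.b 10, S.b 11}) = 3 := by
  have hr : Set.range ![S.b 6 + m • S.b 8, S.b 10, S.b 11] =
      {S.b 6 + m • S.b 8, S.b 10, S.b 11} := by
    ext w
    simp [Matrix.range_cons, Matrix.range_empty, Set.singleton_union]
    tauto
  rw [← hr, finrank_span_eq_card (S.li3 m)]
  simp

lemma fr4 :
    Module.finrank K (Submodule.span K {S.b 6, S.b 8, S.b 10, S.b 11}) = 4 := by
  have hr : Set.range ![S.b 6, S.b 8, S.b 10, S.b 11] =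
      {S.b 6, S.b 8, S.b 10, S.b 11} := by
    ext w
    simp [Matrix.range_cons, Matrix.range_empty, Set.singleton_union]
    tauto
  rw [← hr, finrank_span_eq_card S.li4]
  simp

lemma sp3_le_center (m : K) :
    Submodule.span K {S.b 6 + m • S.b 8, S.b 10, S.b 11} ≤
      Subalgebra.toSubmodule (Subalgebra.center K Λ) := by
  rw [S.center_eq, Submodule.span_le]
  rintro w hw
  simp only [Set.mem_insert_iff, Set.mem_singleton_iff] at hw
  rcases hw with rfl | rfl | rfl
  · exact add_mem (Submodule.subset_span ⟨2, rfl⟩)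
      (Submodule.smul_mem _ _ (Submodule.subset_span ⟨3, rfl⟩))
  · exact Submodule.subset_span ⟨4, rfl⟩
  · exact Submodule.subset_span ⟨5, rfl⟩

lemma sp4_le_center :
    Submodule.span K {S.b 6, S.b 8, S.b 10, S.b 11} ≤
      Subalgebra.toSubmodule (Subalgebra.center K Λ) := by
  rw [S.center_eq, Submodule.span_le]
  rintro w hw
  simp only [Set.mem_insert_iff, Set.mem_singleton_iff] at hw
  rcases hw with rfl | rfl | rfl | rfl
  · exact Submodule.subset_span ⟨2, rfl⟩
  · exact Submodule.subset_span ⟨3, rfl⟩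
  · exact Submodule.subset_span ⟨4, rfl⟩
  · exact Submodule.subset_span ⟨5, rfl⟩

end Setup

end Kul

set_option maxHeartbeats 1600000 in
open Kul in
/-- (Char 2, `λ, μ ∉ {0,1}`.) The first Külshammer ideal of the standard algebra
`Λ₃'(μ)` equals `span{α² + √μ·β², α³, β³}` (codimension 3 in the 6-dimensional
center), whereas for the nonstandard algebra `Λ₃(λ)` it equals
`span{α², β², α³, β³}` (codimension 2 in the 6-dimensional center); hence no
isomorphism of the centers carries one Külshammer ideal onto the other. -/
theorem kulshammer_ideals_of_Lambda3_and_Lambda3'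
    (K : Type*) [Field K] [IsAlgClosed K] [CharP K 2]
    (μ l : K) (hμ0 : μ ≠ 0) (hμ1 : μ ≠ 1) (hl0 : l ≠ 0) (hl1 : l ≠ 1)
    -- the standard algebra Λ' = Λ₃'(μ)
    (Λ' : Type*) [Ring Λ'] [Algebra K Λ']
    (e1' e2' α' β' σ' γ' : Λ')
    (he1' : e1' * e1' = e1') (he2' : e2' * e2' = e2')
    (h12' : e1' * e2' = 0) (h21' : e2' * e1' = 0) (hsum' : e1' + e2' = 1)
    (hα1' : e1' * α' = α') (hα2' : α' * e1' = α')
    (hβ1' : e2' * β' = β') (hβ2' : β' * e2' = β')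
    (hσ1' : e1' * σ' = σ') (hσ2' : σ' * e2' = σ')
    (hγ1' : e2' * γ' = γ') (hγ2' : γ' * e1' = γ')
    (r1' : α' ^ 2 = σ' * γ') (r2' : μ • β' ^ 2 = γ' * σ')
    (r3' : γ' * α' = β' * γ') (r4' : σ' * β' = α' * σ')
    (b' : Module.Basis (Fin 12) K Λ')
    (hb0' : b' 0 = e1') (hb1' : b' 1 = e2') (hb2' : b' 2 = α') (hb3' : b' 3 = β')
    (hb4' : b' 4 = σ') (hb5' : b' 5 = γ') (hb6' : b' 6 = α' ^ 2) (hb7' : b' 7 = α' * σ')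
    (hb8' : b' 8 = β' ^ 2) (hb9' : b' 9 = γ' * α') (hb10' : b' 10 = α' ^ 3)
    (hb11' : b' 11 = β' ^ 3)
    -- the nonstandard algebra Λ = Λ₃(λ)
    (Λ : Type*) [Ring Λ] [Algebra K Λ]
    (e1 e2 α β σ γ : Λ)
    (he1 : e1 * e1 = e1) (he2 : e2 * e2 = e2)
    (h12 : e1 * e2 = 0) (h21 : e2 * e1 = 0) (hsum : e1 + e2 = 1)
    (hα1 : e1 * α = α) (hα2 : α * e1 = α)
    (hβ1 : e2 * β = β) (hβ2 : β * e2 = β)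
    (hσ1 : e1 * σ = σ) (hσ2 : σ * e2 = σ)
    (hγ1 : e2 * γ = γ) (hγ2 : γ * e1 = γ)
    (r0 : α ^ 4 = 0) (r0' : γ * α ^ 2 = 0) (r0'' : α ^ 2 * σ = 0)
    (r1 : α ^ 2 = σ * γ + α ^ 3) (r2 : l • β ^ 2 = γ * σ)
    (r3 : γ * α = β * γ) (r4 : σ * β = α * σ)
    (b : Module.Basis (Fin 12) K Λ)
    (hb0 : b 0 = e1) (hb1 : b 1 = e2) (hb2 : b 2 = α) (hb3 : b 3 = β)
    (hb4 : b 4 = σ) (hb5 : b 5 = γ) (hb6 : b 6 = α ^ 2) (hb7 : b 7 = α * σ)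
    (hb8 : b 8 = β ^ 2) (hb9 : b 9 = γ * α) (hb10 : b 10 = α ^ 3) (hb11 : b 11 = β ^ 3)
    -- the square root of μ
    (m : K) (hm : m ^ 2 = μ) :
    let Ψ' : Λ' →ₗ[K] K := b'.coord 10 + μ⁻¹ • b'.coord 11
    let Ψ : Λ →ₗ[K] K := b.coord 10 + b.coord 6 + l⁻¹ • b.coord 11
    let KA' : Submodule K Λ' := Submodule.span K {x : Λ' | ∃ u v : Λ', x = u * v - v * u}
    let KA : Submodule K Λ := Submodule.span K {x : Λ | ∃ u v : Λ, x = u * v - v * u}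
    let I' : Submodule K Λ' := Submodule.span K {α' ^ 2 + m • β' ^ 2, α' ^ 3, β' ^ 3}
    let I : Submodule K Λ := Submodule.span K {α ^ 2, β ^ 2, α ^ 3, β ^ 3}
    {a : Λ' | ∀ x : Λ', x ^ 2 ∈ KA' → Ψ' (a * x) = 0} = (I' : Set Λ') ∧
    Module.finrank K (Subalgebra.center K Λ') = 6 ∧
    Module.finrank K I' = 3 ∧
    {a : Λ | ∀ x : Λ, x ^ 2 ∈ KA → Ψ (a * x) = 0} = (I : Set Λ) ∧
    Module.finrank K (Subalgebra.center K Λ) = 6 ∧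
    Module.finrank K I = 4 ∧
    ¬ ∃ φ : Subalgebra.center K Λ' ≃ₐ[K] Subalgebra.center K Λ,
        ∀ z : Subalgebra.center K Λ', ((z : Λ') ∈ I' ↔ ((φ z : Λ) ∈ I)) := by
  intro Ψ' Ψ KA' KA I' I
  -- derived relations in Λ'
  have one_sub_mu : (1 : K) - μ ≠ 0 := sub_ne_zero.mpr (Ne.symm hμ1)
  have zA2s' : α' ^ 2 * σ' = 0 := by
    have key : α' ^ 2 * σ' = μ • (α' ^ 2 * σ') := by
      calc α' ^ 2 * σ' = σ' * γ' * σ' := by rw [← r1']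
        _ = σ' * (γ' * σ') := by rw [mul_assoc]
        _ = σ' * (μ • β' ^ 2) := by rw [← r2']
        _ = μ • (σ' * β' ^ 2) := by rw [mul_smul_comm]
        _ = μ • (σ' * (β' * β')) := by rw [pow_two]
        _ = μ • (σ' * β' * β') := by rw [mul_assoc]
        _ = μ • (α' * σ' * β') := by rw [r4']
        _ = μ • (α' * (σ' * β')) := by rw [mul_assoc]
        _ = μ • (α' * (α' * σ')) := by rw [r4']
        _ = μ • (α' * α' * σ') := by rw [mul_assoc]
        _ = μ • (α' ^ 2 * σ') := by rw [pow_two]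
    have h0 : ((1 : K) - μ) • (α' ^ 2 * σ') = 0 := by
      rw [sub_smul, one_smul, ← key, sub_self]
    exact (smul_eq_zero.mp h0).resolve_left one_sub_mu
  have zsB2' : σ' * β' ^ 2 = 0 := by
    calc σ' * β' ^ 2 = σ' * (β' * β') := by rw [pow_two]
      _ = σ' * β' * β' := by rw [mul_assoc]
      _ = α' * σ' * β' := by rw [r4']
      _ = α' * (σ' * β') := by rw [mul_assoc]
      _ = α' * (α' * σ') := by rw [r4']
      _ = α' * α' * σ' := by rw [mul_assoc]
      _ = α' ^ 2 * σ' := by rw [pow_two]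
      _ = 0 := zA2s'
  have za4' : α' ^ 4 = 0 := by
    calc α' ^ 4 = α' ^ 2 * α' ^ 2 := by rw [← pow_add]
      _ = (σ' * γ') * (σ' * γ') := by rw [← r1']
      _ = σ' * ((γ' * σ') * γ') := by noncomm_ring
      _ = σ' * ((μ • β' ^ 2) * γ') := by rw [← r2']
      _ = μ • (σ' * (β' ^ 2 * γ')) := by rw [smul_mul_assoc, mul_smul_comm]
      _ = μ • (σ' * β' ^ 2 * γ') := by rw [mul_assoc]
      _ = 0 := by rw [zsB2', zero_mul, smul_zero]
  have zgA2' : γ' * α' ^ 2 = 0 := by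
    have key : γ' * α' ^ 2 = μ • (γ' * α' ^ 2) := by
      calc γ' * α' ^ 2 = γ' * (σ' * γ') := by rw [← r1']
        _ = γ' * σ' * γ' := by rw [mul_assoc]
        _ = (μ • β' ^ 2) * γ' := by rw [← r2']
        _ = μ • (β' ^ 2 * γ') := by rw [smul_mul_assoc]
        _ = μ • (β' * (β' * γ')) := by rw [pow_two, mul_assoc]
        _ = μ • (β' * (γ' * α')) := by rw [← r3']
        _ = μ • (β' * γ' * α') := by rw [mul_assoc]
        _ = μ • (γ' * α' * α') := by rw [← r3']
        _ = μ • (γ' * (α' * α')) := by rw [mul_assoc]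
        _ = μ • (γ' * α' ^ 2) := by rw [pow_two]
    have h0 : ((1 : K) - μ) • (γ' * α' ^ 2) = 0 := by
      rw [sub_smul, one_smul, ← key, sub_self]
    exact (smul_eq_zero.mp h0).resolve_left one_sub_mu
  have zB2g' : β' ^ 2 * γ' = 0 := by
    calc β' ^ 2 * γ' = β' * (β' * γ') := by rw [pow_two, mul_assoc]
      _ = β' * (γ' * α') := by rw [← r3']
      _ = β' * γ' * α' := by rw [mul_assoc]
      _ = γ' * α' * α' := by rw [← r3']
      _ = γ' * (α' * α') := by rw [mul_assoc]
      _ = γ' * α' ^ 2 := by rw [pow_two]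
      _ = 0 := zgA2'
  have zb4' : β' ^ 4 = 0 := by
    have h0 : μ • β' ^ 4 = 0 := by
      calc μ • β' ^ 4 = (μ • β' ^ 2) * β' ^ 2 := by rw [smul_mul_assoc, ← pow_add]
        _ = (γ' * σ') * β' ^ 2 := by rw [r2']
        _ = γ' * (σ' * β' ^ 2) := by rw [mul_assoc]
        _ = 0 := by rw [zsB2', mul_zero]
    exact (smul_eq_zero.mp h0).resolve_left hμ0
  set S1 : Kul.Setup K Λ' :=
    { e1 := e1', e2 := e2', a := α', B := β', s := σ', g := γ', t := μ, ε := 0,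
      ht := hμ0, he1 := he1', he2 := he2', h12 := h12', h21 := h21', hsum := hsum',
      ha1 := hα1', ha2 := hα2', hB1 := hβ1', hB2 := hβ2', hs1 := hσ1', hs2 := hσ2',
      hg1 := hγ1', hg2 := hγ2',
      r1 := by rw [zero_smul, sub_zero, r1'],
      r2 := r2'.symm, r3 := r3', r4 := r4',
      za4 := za4', zA2s := zA2s', zgA2 := zgA2', zb4 := zb4', zsB2 := zsB2',
      zB2g := zB2g',
      b := b', hb0 := hb0', hb1 := hb1', hb2 := hb2', hb3 := hb3', hb4 := hb4',
      hb5 := hb5', hb6 := hb6', hb7 := hb7', hb8 := hb8', hb9 := hb9',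
      hb10 := hb10', hb11 := hb11' } with hS1
  -- derived relations in Λ
  have zgA3 : γ * α ^ 3 = 0 := by rw [pow_succ, ← mul_assoc, r0', zero_mul]
  have hsg : σ * γ = α ^ 2 - α ^ 3 := by rw [r1]; abel
  have zsB2n : σ * β ^ 2 = 0 := by
    calc σ * β ^ 2 = σ * (β * β) := by rw [pow_two]
      _ = σ * β * β := by rw [mul_assoc]
      _ = α * σ * β := by rw [r4]
      _ = α * (σ * β) := by rw [mul_assoc]
      _ = α * (α * σ) := by rw [r4]
      _ = α * α * σ := by rw [mul_assoc]
      _ = α ^ 2 * σ := by rw [pow_two]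
      _ = 0 := r0''
  have zB2gn : β ^ 2 * γ = 0 := by
    have h0 : l • (β ^ 2 * γ) = 0 := by
      calc l • (β ^ 2 * γ) = (l • β ^ 2) * γ := by rw [smul_mul_assoc]
        _ = (γ * σ) * γ := by rw [r2]
        _ = γ * (σ * γ) := by rw [mul_assoc]
        _ = γ * (α ^ 2 - α ^ 3) := by rw [hsg]
        _ = γ * α ^ 2 - γ * α ^ 3 := by rw [mul_sub]
        _ = 0 := by rw [r0', zgA3, sub_zero]
    exact (smul_eq_zero.mp h0).resolve_left hl0
  have zb4n : β ^ 4 = 0 := by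
    have h0 : l • β ^ 4 = 0 := by
      calc l • β ^ 4 = (l • β ^ 2) * β ^ 2 := by rw [smul_mul_assoc, ← pow_add]
        _ = (γ * σ) * β ^ 2 := by rw [r2]
        _ = γ * (σ * β ^ 2) := by rw [mul_assoc]
        _ = 0 := by rw [zsB2n, mul_zero]
    exact (smul_eq_zero.mp h0).resolve_left hl0
  set S2 : Kul.Setup K Λ :=
    { e1 := e1, e2 := e2, a := α, B := β, s := σ, g := γ, t := l, ε := 1,
      ht := hl0, he1 := he1, he2 := he2, h12 := h12, h21 := h21, hsum := hsum,
      ha1 := hα1, ha2 := hα2, hB1 := hβ1, hB2 := hβ2, hs1 := hσ1, hs2 := hσ2,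
      hg1 := hγ1, hg2 := hγ2,
      r1 := by rw [one_smul, hsg],
      r2 := r2.symm, r3 := r3, r4 := r4,
      za4 := r0, zA2s := r0'', zgA2 := r0', zb4 := zb4n, zsB2 := zsB2n,
      zB2g := zB2gn,
      b := b, hb0 := hb0, hb1 := hb1, hb2 := hb2, hb3 := hb3, hb4 := hb4,
      hb5 := hb5, hb6 := hb6, hb7 := hb7, hb8 := hb8, hb9 := hb9,
      hb10 := hb10, hb11 := hb11 } with hS2
  have hps1 : S1.psi = Ψ' := by
    show S1.b.coord 10 + (0 : K) • S1.b.coord 6 + μ⁻¹ • S1.b.coord 11 = Ψ'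
    rw [zero_smul, add_zero]
  have hps2 : S2.psi = Ψ := by
    show S2.b.coord 10 + (1 : K) • S2.b.coord 6 + l⁻¹ • S2.b.coord 11 = Ψ
    rw [one_smul]
  have hKA1 : KA' = Kul.Kspan K Λ' := rfl
  have hKA2 : KA = Kul.Kspan K Λ := rfl
  have hI1 : I' = Submodule.span K {b' 6 + m • b' 8, b' 10, b' 11} := by
    rw [hb6', hb8', hb10', hb11']
  have hI2 : I = Submodule.span K {b 6, b 8, b 10, b 11} := by
    rw [hb6, hb8, hb10, hb11]
  have hmS : m ^ 2 = S1.t := hm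
  have conj1 : {a : Λ' | ∀ x : Λ', x ^ 2 ∈ KA' → Ψ' (a * x) = 0} = (I' : Set Λ') := by
    simp only [hKA1, ← hps1, hI1]
    exact S1.perp0 rfl m hmS
  have conj3 : Module.finrank K I' = 3 := by
    rw [hI1]; exact S1.fr3 m
  have conj4 : {a : Λ | ∀ x : Λ, x ^ 2 ∈ KA → Ψ (a * x) = 0} = (I : Set Λ) := by
    simp only [hKA2, ← hps2, hI2]
    exact S2.perp1 rfl
  have conj6 : Module.finrank K I = 4 := by
    rw [hI2]; exact S2.fr4
  refine ⟨conj1, S1.finrank_center, conj3, conj4, S2.finrank_center, conj6, ?_⟩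
  rintro ⟨φ, hφ⟩
  have hle1 : I' ≤ Subalgebra.toSubmodule (Subalgebra.center K Λ') := by
    rw [hI1]; exact S1.sp3_le_center m
  have hle2 : I ≤ Subalgebra.toSubmodule (Subalgebra.center K Λ) := by
    rw [hI2]; exact S2.sp4_le_center
  set j1 : (Subalgebra.center K Λ') →ₗ[K] Λ' := (Subalgebra.center K Λ').val.toLinearMap with hj1
  set j2 : (Subalgebra.center K Λ) →ₗ[K] Λ := (Subalgebra.center K Λ).val.toLinearMap with hj2
  have hinj1 : Function.Injective j1 := fun x y h => Subtype.ext h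
  have hinj2 : Function.Injective j2 := fun x y h => Subtype.ext h
  set Q1 : Submodule K (Subalgebra.center K Λ') := I'.comap j1 with hQ1
  set Q2 : Submodule K (Subalgebra.center K Λ) := I.comap j2 with hQ2
  have hmap1 : Q1.map j1 = I' := by
    apply le_antisymm
    · rintro w ⟨z, hz, rfl⟩; exact hz
    · intro w hw
      exact ⟨⟨w, (Subalgebra.mem_toSubmodule _).mp (hle1 hw)⟩, hw, rfl⟩
  have hmap2 : Q2.map j2 = I := by
    apply le_antisymm
    · rintro w ⟨z, hz, rfl⟩; exact hz
    · intro w hw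
      exact ⟨⟨w, (Subalgebra.mem_toSubmodule _).mp (hle2 hw)⟩, hw, rfl⟩
  have f1 : Module.finrank K Q1 = 3 := by
    have e := (Submodule.equivMapOfInjective j1 hinj1 Q1).finrank_eq
    rw [hmap1] at e
    rw [e, conj3]
  have f2 : Module.finrank K Q2 = 4 := by
    have e := (Submodule.equivMapOfInjective j2 hinj2 Q2).finrank_eq
    rw [hmap2] at e
    rw [e, conj6]
  have hmapφ : Q1.map φ.toLinearEquiv.toLinearMap = Q2 := by
    ext w
    simp only [Submodule.mem_map, Submodule.mem_comap]
    constructor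
    · rintro ⟨z, hz, rfl⟩
      exact (hφ z).mp hz
    · intro hw
      refine ⟨φ.symm w, ?_, ?_⟩
      · apply (hφ (φ.symm w)).mpr
        rw [AlgEquiv.apply_symm_apply]
        exact hw
      · show φ (φ.symm w) = w
        exact AlgEquiv.apply_symm_apply φ w
  have hinjφ : Function.Injective φ.toLinearEquiv.toLinearMap := fun x y h => φ.injective h
  have f12 : Module.finrank K Q1 = Module.finrank K Q2 := by
    have e := (Submodule.equivMapOfInjective φ.toLinearEquiv.toLinearMap hinjφ Q1).finrank_eq
    rw [hmapφ] at e
    exact e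
  rw [f1, f2] at f12
  exact absurd f12 (by norm_num)
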